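/- arXiv:1108.5964 — 6 statements merged into one kernel-verified Lean document; each statement's English description precedes it below -/
import Mathlib

section
/- Let t ≥ 2 be an integer and let q be a complex number with |q| < 1/2. Then the power series Σ_{n≥0} c_n q^n converges absolutely, the series defining N(q) and D(q) converge absolutely, and (Σ_{n≥0} c_n q^n) · D(q) = N(q). -/
noncomputable section

/-- `[k] = 1 + t + t^2 + ⋯ + t^(k-1)`. -/
def brk (t k : ℕ) : ℕ := ∑ i ∈ Finset.range k, t ^ i

/-- `f_j(q) = q^[j] / (1 - q^[j])`. -/
def ff (t : ℕ) (q : ℂ) (j : ℕ) : ℂ := q ^ brk t j / (1 - q ^ brk t j)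

/-- `N(q) = Σ_{k≥0} (-1)^k q^[k] Π_{j=1}^k f_j(q)`. -/
def Nfun (t : ℕ) (q : ℂ) : ℂ :=
  ∑' k : ℕ, (-1 : ℂ) ^ k * q ^ brk t k * ∏ j ∈ Finset.Icc 1 k, ff t q j

/-- `D(q) = Σ_{k≥0} (-1)^k Π_{j=1}^k f_j(q)`. -/
def Dfun (t : ℕ) (q : ℂ) : ℂ :=
  ∑' k : ℕ, (-1 : ℂ) ^ k * ∏ j ∈ Finset.Icc 1 k, ff t q j

/-- A "bounded degree sequence": positive integers, first entry 1,
`b_{i+1} ≤ t b_i`. -/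
def IsBSeq (t : ℕ) (l : List ℕ) : Prop :=
  (∀ x ∈ l, 0 < x) ∧ (l ≠ [] → l.headI = 1) ∧
  ∀ i (h : i + 1 < l.length), l.get ⟨i + 1, h⟩ ≤ t * l.get ⟨i, Nat.lt_of_succ_lt h⟩

/-- `c_n`: the number of bounded degree sequences with sum `n`. -/
def cseq (t n : ℕ) : ℕ := {l : List ℕ | IsBSeq t l ∧ l.sum = n}.ncard

namespace HuffProof

open Finset Function

lemma brk_zero (t : ℕ) : brk t 0 = 0 := rfl

lemma brk_succ (t k : ℕ) : brk t (k + 1) = 1 + t * brk t k := by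
  rw [brk, brk, Finset.sum_range_succ']
  simp only [pow_succ, pow_zero, Finset.mul_sum]
  rw [add_comm]
  exact congrArg (1 + ·) (Finset.sum_congr rfl fun i _ => mul_comm _ _)

lemma one_le_brk (t k : ℕ) (hk : 1 ≤ k) : 1 ≤ brk t k := by
  obtain ⟨j, rfl⟩ := Nat.exists_eq_add_of_le hk
  rw [Nat.add_comm, brk_succ]
  omega

/-- capacity of a list: `t * last` or `1` for the empty list. -/
def cap (t : ℕ) (l : List ℕ) : ℕ := (l.getLast?.map (t * ·)).getD 1

lemma cap_nil (t : ℕ) : cap t [] = 1 := rfl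

lemma cap_concat (t : ℕ) (l : List ℕ) (b : ℕ) : cap t (l ++ [b]) = t * b := by
  simp [cap, List.getLast?_concat]

lemma cap_of_ne_nil (t : ℕ) (l : List ℕ) (h : l ≠ []) :
    cap t l = t * l.getLast h := by
  simp [cap, List.getLast?_eq_getLast h]

lemma isBSeq_iff (t : ℕ) (l : List ℕ) :
    IsBSeq t l ↔ (∀ x ∈ l, 0 < x) ∧ (l ≠ [] → l.headI = 1) ∧
      List.Chain' (fun a b => b ≤ t * a) l := by
  unfold IsBSeq
  unfold List.Chain'
  rw [List.isChain_iff_getElem]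
  constructor <;> rintro ⟨h1, h2, h3⟩ <;> exact ⟨h1, h2, fun i h => h3 i (by omega)⟩

lemma isBSeq_nil (t : ℕ) : IsBSeq t [] := by
  simp [isBSeq_iff, List.Chain']

lemma headI_append (l : List ℕ) (b : ℕ) (h : l ≠ []) :
    (l ++ [b]).headI = l.headI := by
  cases l with
  | nil => exact absurd rfl h
  | cons a l => rfl

lemma isBSeq_concat (t : ℕ) (l : List ℕ) (b : ℕ) :
    IsBSeq t (l ++ [b]) ↔ IsBSeq t l ∧ 0 < b ∧ b ≤ cap t l := by
  rcases eq_or_ne l [] with rfl | hne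
  · simp only [List.nil_append, cap_nil]
    constructor
    · rintro ⟨h1, h2, h3⟩
      have hb : 0 < b := h1 b (by simp)
      have hb1 : [b].headI = 1 := h2 (by simp)
      simp only [List.headI_cons] at hb1
      exact ⟨isBSeq_nil t, hb, by omega⟩
    · rintro ⟨-, hb, hb1⟩
      have hb2 : b = 1 := by omega
      subst hb2
      exact ⟨by simp, fun _ => rfl, fun i h => by simp at h⟩
  · have h2 : l ++ [b] ≠ [] := by simp
    simp only [h2, isBSeq_iff, List.Chain', List.isChain_append, List.forall_mem_append,
      List.forall_mem_singleton, headI_append l b hne,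
      List.getLast?_eq_getLast hne, cap_of_ne_nil t l hne,
      List.isChain_singleton, List.head?_cons, Option.mem_def,
      Option.some.injEq, ne_eq, hne, not_false_eq_true, forall_const,
      List.append_ne_nil_of_right_ne_nil, forall_eq']
    tauto


/-! ### Counting -/

def Sn (t n : ℕ) : Set (List ℕ) := {l : List ℕ | IsBSeq t l ∧ l.sum = n}

lemma cseq_eq (t n : ℕ) : cseq t n = (Sn t n).ncard := rfl

def toComp (t n : ℕ) : ↥(Sn t n) → Composition n :=
  fun l => ⟨l.1, fun hi => l.2.1.1 _ hi, l.2.2⟩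

lemma toComp_inj (t n : ℕ) : Function.Injective (toComp t n) :=
  fun a b h => Subtype.ext (congrArg Composition.blocks h)

instance (t n : ℕ) : Finite ↥(Sn t n) :=
  Finite.of_injective _ (toComp_inj t n)

lemma cseq_le (t n : ℕ) : cseq t n ≤ 2 ^ n := by
  calc cseq t n = Nat.card ↥(Sn t n) := (Nat.card_coe_set_eq _)
    _ ≤ Nat.card (Composition n) :=
        Nat.card_le_card_of_injective _ (toComp_inj t n)
    _ = 2 ^ (n - 1) := by rw [Nat.card_eq_fintype_card, composition_card]
    _ ≤ 2 ^ n := Nat.pow_le_pow_right (by norm_num) (Nat.sub_le n 1)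

/-- The type of all bounded degree sequences. -/
abbrev BS (t : ℕ) : Type := {l : List ℕ // IsBSeq t l}

def fiberEquiv (t n : ℕ) : {s : BS t // s.1.sum = n} ≃ ↥(Sn t n) :=
  Equiv.subtypeSubtypeEquivSubtypeInter (IsBSeq t) (fun l => l.sum = n)

instance (t n : ℕ) : Finite {s : BS t // s.1.sum = n} :=
  Finite.of_equiv _ (fiberEquiv t n).symm

lemma card_fiber (t n : ℕ) : Nat.card {s : BS t // s.1.sum = n} = cseq t n := by
  rw [Nat.card_congr (fiberEquiv t n), Nat.card_coe_set_eq, cseq_eq]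

lemma tsum_const_fiber {α : Type*} [Finite α] {M : Type*} [AddCommMonoid M]
    [TopologicalSpace M] [T2Space M] (x : M) : ∑' _ : α, x = Nat.card α • x := by
  letI := Fintype.ofFinite α
  rw [tsum_fintype, Finset.sum_const, Finset.card_univ, Nat.card_eq_fintype_card]


/-! ### The generating function Φ -/

def term (t : ℕ) (q u : ℂ) (l : List ℕ) : ℂ := q ^ l.sum * u ^ cap t l

def Phi (t : ℕ) (q u : ℂ) : ℂ := ∑' s : BS t, term t q u s.1

section Conv

variable {t : ℕ} {q : ℂ} (hq : ‖q‖ < 1 / 2)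

include hq

lemma summable_S : Summable (fun s : BS t => ‖q‖ ^ s.1.sum) := by
  have h0 : (0:ℝ) ≤ ‖q‖ := norm_nonneg q
  rw [← (Equiv.sigmaFiberEquiv (fun s : BS t => s.1.sum)).summable_iff]
  refine (summable_sigma_of_nonneg fun p => by
      simp only [Function.comp_apply]; positivity).mpr
    ⟨fun n => Summable.of_finite, ?_⟩
  refine Summable.of_nonneg_of_le (fun n => tsum_nonneg fun c => by
      simp only [Function.comp_apply]; positivity)
    (fun n => ?_) (summable_geometric_of_lt_one (r := 2 * ‖q‖)
      (by positivity) (by linarith))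
  have h2 : ∀ c : {s : BS t // s.1.sum = n},
      ((fun s : BS t => ‖q‖ ^ s.1.sum) ∘
        (Equiv.sigmaFiberEquiv (fun s : BS t => s.1.sum))) ⟨n, c⟩ = ‖q‖ ^ n := by
    rintro ⟨⟨l, hl⟩, hc⟩
    simp only [Equiv.sigmaFiberEquiv, Equiv.coe_fn_mk, Function.comp_apply]
    rw [hc]
  rw [tsum_congr h2, tsum_const_fiber, card_fiber, nsmul_eq_mul]
  calc (cseq t n : ℝ) * ‖q‖ ^ n ≤ (2:ℝ) ^ n * ‖q‖ ^ n := by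
        have := cseq_le t n
        gcongr
        exact_mod_cast this
    _ = (2 * ‖q‖) ^ n := (mul_pow _ _ _).symm

lemma norm_term_le {u : ℂ} (hu : ‖u‖ ≤ 1) (s : BS t) :
    ‖term t q u s.1‖ ≤ ‖q‖ ^ s.1.sum := by
  rw [term, norm_mul, norm_pow, norm_pow]
  calc ‖q‖ ^ s.1.sum * ‖u‖ ^ cap t s.1 ≤ ‖q‖ ^ s.1.sum * 1 := by
        gcongr
        exact pow_le_one₀ (norm_nonneg u) hu
    _ = ‖q‖ ^ s.1.sum := mul_one _

lemma summable_term {u : ℂ} (hu : ‖u‖ ≤ 1) :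
    Summable (fun s : BS t => term t q u s.1) :=
  Summable.of_norm_bounded (summable_S hq) (norm_term_le hq hu)

lemma norm_Phi_le {u : ℂ} (hu : ‖u‖ ≤ 1) :
    ‖Phi t q u‖ ≤ ∑' s : BS t, ‖q‖ ^ s.1.sum := by
  refine (norm_tsum_le_tsum_norm ?_).trans
    (Summable.tsum_le_tsum (norm_term_le hq hu) ?_ (summable_S hq))
  · exact Summable.of_nonneg_of_le (fun s => norm_nonneg _)
      (norm_term_le hq hu) (summable_S hq)
  · exact Summable.of_nonneg_of_le (fun s => norm_nonneg _)
      (norm_term_le hq hu) (summable_S hq)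

set_option maxHeartbeats 1000000 in
lemma Phi_one : Phi t q 1 = ∑' n : ℕ, (cseq t n : ℂ) * q ^ n := by
  have hFsum : Summable (fun s : BS t => q ^ s.1.sum) :=
    Summable.of_norm ((summable_S hq).congr fun s => (norm_pow q _).symm)
  have h1 : ∀ s : BS t, term t q 1 s.1 = q ^ s.1.sum := fun s => by
    simp [term]
  have hsig : Summable (fun p : (Σ n : ℕ, {s : BS t // s.1.sum = n}) =>
      q ^ (((Equiv.sigmaFiberEquiv (fun s : BS t => s.1.sum)) p : BS t)).1.sum) :=
    (Equiv.sigmaFiberEquiv (fun s : BS t => s.1.sum)).summable_iff.mpr hFsum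
  rw [Phi, tsum_congr h1,
    ← (Equiv.sigmaFiberEquiv (fun s : BS t => s.1.sum)).tsum_eq
      (fun s : BS t => q ^ s.1.sum),
    Summable.tsum_sigma hsig]
  refine tsum_congr fun n => ?_
  refine Eq.trans (tsum_congr (f := fun c : {s : BS t // s.1.sum = n} =>
      q ^ (((Equiv.sigmaFiberEquiv (fun s : BS t => s.1.sum)) ⟨n, c⟩ : BS t)).1.sum)
      (g := fun _ => q ^ n) ?_) ?_
  · rintro ⟨⟨l, hl⟩, hc⟩
    simp only [Equiv.sigmaFiberEquiv, Equiv.coe_fn_mk]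
    rw [hc]
  · rw [tsum_const_fiber, card_fiber, nsmul_eq_mul]

/-! ### The append bijection and the functional equation -/

end Conv

def emptyBS (t : ℕ) : BS t := ⟨[], isBSeq_nil t⟩

abbrev BS' (t : ℕ) : Type := {l : List ℕ // IsBSeq t l ∧ l ≠ []}

def appendMap (t : ℕ) : (Σ s : BS t, Fin (cap t s.1)) → BS' t := fun p =>
  ⟨p.1.1 ++ [p.2.1 + 1], by
    rw [isBSeq_concat]
    exact ⟨p.1.2, Nat.succ_pos _, Nat.succ_le_of_lt p.2.2⟩,
   by simp⟩

lemma appendMap_bij (t : ℕ) : Function.Bijective (appendMap t) := by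
  constructor
  · rintro ⟨⟨l, hl⟩, b⟩ ⟨⟨l', hl'⟩, b'⟩ h
    simp only [appendMap, Subtype.mk.injEq] at h
    obtain ⟨h1, h2⟩ := List.append_inj' h rfl
    simp only [List.cons.injEq, and_true] at h2
    subst h1
    have hb : b = b' := Fin.ext (by omega)
    subst hb
    rfl
  · rintro ⟨l, hl, hne⟩
    have h := (isBSeq_concat t l.dropLast (l.getLast hne)).mp
      (by rwa [List.dropLast_append_getLast hne])
    refine ⟨⟨⟨l.dropLast, h.1⟩, ⟨l.getLast hne - 1, by show l.getLast hne - 1 < cap t l.dropLast; omega⟩⟩, ?_⟩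
    apply Subtype.ext
    show l.dropLast ++ [l.getLast hne - 1 + 1] = l
    have h3 : l.getLast hne - 1 + 1 = l.getLast hne := by
      have := h.2.1; omega
    rw [h3, List.dropLast_append_getLast]

def appendEquiv (t : ℕ) : (Σ s : BS t, Fin (cap t s.1)) ≃ BS' t :=
  Equiv.ofBijective _ (appendMap_bij t)

section FE

variable {t : ℕ} {q : ℂ} (hq : ‖q‖ < 1 / 2)

include hq

set_option maxHeartbeats 2000000 in
lemma Phi_eq {u : ℂ} (hu : ‖u‖ ≤ 1) :
    Phi t q u = u + (q * u ^ t) / (q * u ^ t - 1) *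
      (Phi t q (q * u ^ t) - Phi t q 1) := by
  classical
  set v := q * u ^ t with hv
  have hv1 : ‖v‖ ≤ ‖q‖ := by
    rw [hv, norm_mul, norm_pow]
    calc ‖q‖ * ‖u‖ ^ t ≤ ‖q‖ * 1 := by
          gcongr
          exact pow_le_one₀ (norm_nonneg u) hu
      _ = ‖q‖ := mul_one _
  have hvlt : ‖v‖ < 1 := lt_of_le_of_lt hv1 (by linarith)
  have hvne1 : v ≠ 1 := fun h => by rw [h] at hvlt; simp at hvlt
  have hvne : v - 1 ≠ 0 := sub_ne_zero.mpr hvne1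
  have hv_le : ‖v‖ ≤ 1 := hvlt.le
  have hsum := summable_term (t := t) hq hu
  have hterm_empty : term t q u (emptyBS t).1 = u := by
    simp [term, emptyBS, cap_nil]
  -- inclusion of nonempty sequences
  set ι : BS' t → BS t := fun s' => ⟨s'.1, s'.2.1⟩ with hι
  have hinj : Function.Injective ι := by
    rintro ⟨la, ha⟩ ⟨lb, hb⟩ h
    exact Subtype.ext (congrArg Subtype.val h : la = lb)
  have hsum' : Summable (fun s' : BS' t => term t q u (ι s').1) :=
    hsum.comp_injective hinj
  have hsig : Summable (fun p : (Σ s : BS t, Fin (cap t s.1)) =>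
      term t q u ((appendEquiv t) p).1) :=
    (appendEquiv t).summable_iff.mpr hsum'
  have hstep2 : ∑' s : BS t, (if s = emptyBS t then 0 else term t q u s.1)
      = ∑' s' : BS' t, term t q u (ι s').1 := by
    refine (Function.Injective.tsum_eq hinj ?_).symm.trans (tsum_congr ?_)
    · intro x hx
      rcases eq_or_ne x.1 [] with hxe | hxe
      · exfalso
        apply hx
        show (if x = emptyBS t then 0 else term t q u x.1) = 0
        rw [if_pos (Subtype.ext hxe)]
      · exact ⟨⟨x.1, x.2, hxe⟩, rfl⟩
    · intro s'
      have : ι s' ≠ emptyBS t := fun h => s'.2.2 (congrArg Subtype.val h)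
      rw [if_neg this]
  have hstep3 : ∑' s' : BS' t, term t q u (ι s').1
      = ∑' p : (Σ s : BS t, Fin (cap t s.1)), term t q u ((appendEquiv t) p).1 :=
    ((appendEquiv t).tsum_eq (fun s' : BS' t => term t q u (ι s').1)).symm
  have hinner : ∀ s : BS t, ∑' b : Fin (cap t s.1),
      term t q u ((appendEquiv t) ⟨s, b⟩).1
      = v / (v - 1) * (term t q v s.1 - term t q 1 s.1) := by
    intro s
    have hpt : ∀ b : Fin (cap t s.1), term t q u ((appendEquiv t) ⟨s, b⟩).1
        = q ^ s.1.sum * v ^ ((b : ℕ) + 1) := by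
      intro b
      have hco : ((appendEquiv t) ⟨s, b⟩).1 = s.1 ++ [(b : ℕ) + 1] := rfl
      rw [hco, term, cap_concat, List.sum_append]
      simp only [List.sum_cons, List.sum_nil, add_zero]
      rw [pow_add, pow_mul, hv, mul_pow]
      ring
    rw [tsum_congr hpt, tsum_fintype, ← Finset.mul_sum]
    rw [Fin.sum_univ_eq_sum_range (fun i => v ^ (i + 1)) (cap t s.1)]
    have hg : ∑ i ∈ Finset.range (cap t s.1), v ^ (i + 1)
        = (v ^ (cap t s.1) - 1) / (v - 1) * v := by
      rw [← geom_sum_eq hvne1, Finset.sum_mul]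
      exact Finset.sum_congr rfl fun i _ => pow_succ v i
    rw [hg, term, term, one_pow]
    field_simp
  rw [Phi, Summable.tsum_eq_add_tsum_ite hsum (emptyBS t), hterm_empty]
  congr 1
  rw [hstep2, hstep3, Summable.tsum_sigma hsig, tsum_congr hinner, tsum_mul_left,
    Summable.tsum_sub (summable_term (t := t) hq hv_le) (summable_term (t := t) hq norm_one.le)]
  rfl

end FE

/-! ### Bounds and the main identity -/

abbrev Pprod (t : ℕ) (q : ℂ) (k : ℕ) : ℂ := ∏ j ∈ Finset.Icc 1 k, ff t q j

section Main

variable {t : ℕ} {q : ℂ} (hq : ‖q‖ < 1 / 2)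

include hq

lemma norm_q_pow_le_one (m : ℕ) : ‖q ^ m‖ ≤ 1 := by
  rw [norm_pow]; exact pow_le_one₀ (norm_nonneg q) (by linarith)

lemma norm_ff_le {k : ℕ} (hk : 1 ≤ k) : ‖ff t q k‖ ≤ 2 * ‖q‖ := by
  have hb : 1 ≤ brk t k := one_le_brk t k hk
  have h1 : ‖q ^ brk t k‖ ≤ ‖q‖ := by
    rw [norm_pow]
    calc ‖q‖ ^ brk t k ≤ ‖q‖ ^ 1 :=
        pow_le_pow_of_le_one (norm_nonneg q) (by linarith) hb
      _ = ‖q‖ := pow_one _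
  have h2 : (1:ℝ)/2 ≤ ‖1 - q ^ brk t k‖ := by
    have h3 := norm_sub_norm_le (1 : ℂ) (q ^ brk t k)
    rw [norm_one] at h3
    linarith
  rw [ff, norm_div]
  calc ‖q ^ brk t k‖ / ‖1 - q ^ brk t k‖ ≤ ‖q‖ / (1/2) :=
      div_le_div₀ (norm_nonneg q) h1 (by norm_num) h2
    _ = 2 * ‖q‖ := by ring

lemma norm_P_le (k : ℕ) : ‖Pprod t q k‖ ≤ (2 * ‖q‖) ^ k := by
  rw [Pprod, norm_prod]
  calc ∏ j ∈ Finset.Icc 1 k, ‖ff t q j‖ ≤ ∏ _j ∈ Finset.Icc 1 k, (2 * ‖q‖) :=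
      Finset.prod_le_prod (fun j _ => norm_nonneg _)
        (fun j hj => norm_ff_le hq (Finset.mem_Icc.mp hj).1)
    _ = (2 * ‖q‖) ^ k := by
      rw [Finset.prod_const, Nat.card_Icc]
      norm_num

lemma summable_norm_N :
    Summable (fun k : ℕ => ‖(-1 : ℂ) ^ k * q ^ brk t k * Pprod t q k‖) := by
  refine Summable.of_nonneg_of_le (fun k => norm_nonneg _) (fun k => ?_)
    (summable_geometric_of_lt_one (r := 2 * ‖q‖) (by positivity) (by linarith))
  rw [norm_mul, norm_mul, norm_pow, norm_neg, norm_one, one_pow, one_mul]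
  calc ‖q ^ brk t k‖ * ‖Pprod t q k‖ ≤ 1 * (2 * ‖q‖) ^ k :=
      mul_le_mul (norm_q_pow_le_one hq _) (norm_P_le hq k) (norm_nonneg _)
        zero_le_one
    _ = (2 * ‖q‖) ^ k := one_mul _

lemma summable_norm_D :
    Summable (fun k : ℕ => ‖(-1 : ℂ) ^ k * Pprod t q k‖) := by
  refine Summable.of_nonneg_of_le (fun k => norm_nonneg _) (fun k => ?_)
    (summable_geometric_of_lt_one (r := 2 * ‖q‖) (by positivity) (by linarith))
  rw [norm_mul, norm_pow, norm_neg, norm_one, one_pow, one_mul]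
  exact norm_P_le hq k

lemma key (K : ℕ) :
    Phi t q 1 * (∑ k ∈ Finset.range K, (-1:ℂ) ^ k * Pprod t q k)
      - (∑ k ∈ Finset.range K, (-1:ℂ) ^ k * q ^ brk t k * Pprod t q k)
    = (-1:ℂ) ^ (K+1) * Pprod t q K *
        (Phi t q 1 - Phi t q (q ^ brk t K)) := by
  induction K with
  | zero => simp [brk_zero]
  | succ K ih =>
    have hu : ‖q ^ brk t K‖ ≤ 1 := norm_q_pow_le_one hq _
    have hfe := Phi_eq (t := t) hq hu
    have hv : q * (q ^ brk t K) ^ t = q ^ brk t (K + 1) := by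
      rw [← pow_mul, brk_succ, pow_add, pow_one, mul_comm (brk t K) t]
    have hwlt : ‖q ^ brk t (K+1)‖ < 1 := by
      rw [norm_pow]
      calc ‖q‖ ^ brk t (K+1) ≤ ‖q‖ ^ 1 :=
          pow_le_pow_of_le_one (norm_nonneg q) (by linarith)
            (one_le_brk t (K+1) (Nat.succ_le_succ (Nat.zero_le K)))
        _ = ‖q‖ := pow_one _
        _ < 1 := by linarith
    have h1w : (1 : ℂ) - q ^ brk t (K+1) ≠ 0 := by
      refine sub_ne_zero.mpr fun h => ?_
      rw [← h, norm_one] at hwlt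
      exact lt_irrefl 1 hwlt
    have hw1 : q ^ brk t (K+1) - (1:ℂ) ≠ 0 := fun h =>
      h1w (by linear_combination -h)
    have hfe' : Phi t q (q ^ brk t K) = q ^ brk t K +
        ff t q (K+1) * (Phi t q 1 - Phi t q (q ^ brk t (K+1))) := by
      rw [hfe, hv]
      congr 1
      rw [ff]
      field_simp
      ring
    have hPs : Pprod t q (K+1) = Pprod t q K * ff t q (K+1) := by
      rw [Pprod, Pprod, Finset.prod_Icc_succ_top (Nat.le_add_left 1 K)]
    rw [Finset.sum_range_succ, Finset.sum_range_succ, hPs]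
    linear_combination ih + ((-1:ℂ) ^ K * Pprod t q K) * hfe'

end Main

end HuffProof

open HuffProof in
theorem stmt_0 (t : ℕ) (ht : 2 ≤ t) (q : ℂ) (hq : ‖q‖ < 1 / 2) :
    Summable (fun n : ℕ => ‖(cseq t n : ℂ) * q ^ n‖) ∧
    Summable (fun k : ℕ =>
      ‖(-1 : ℂ) ^ k * q ^ brk t k * ∏ j ∈ Finset.Icc 1 k, ff t q j‖) ∧
    Summable (fun k : ℕ => ‖(-1 : ℂ) ^ k * ∏ j ∈ Finset.Icc 1 k, ff t q j‖) ∧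
    (∑' n : ℕ, (cseq t n : ℂ) * q ^ n) * Dfun t q = Nfun t q := by
  have h2q0 : (0:ℝ) ≤ 2 * ‖q‖ := by positivity
  have h2q1 : 2 * ‖q‖ < 1 := by linarith
  refine ⟨?_, summable_norm_N hq, summable_norm_D hq, ?_⟩
  · refine Summable.of_nonneg_of_le (fun n => norm_nonneg _) (fun n => ?_)
      (summable_geometric_of_lt_one h2q0 h2q1)
    rw [norm_mul, norm_pow, Complex.norm_natCast]
    calc (cseq t n : ℝ) * ‖q‖ ^ n ≤ 2 ^ n * ‖q‖ ^ n := by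
          have h := cseq_le t n
          gcongr
          exact_mod_cast h
      _ = (2 * ‖q‖) ^ n := (mul_pow _ _ _).symm
  · have hDs : Summable (fun k : ℕ => (-1:ℂ) ^ k * Pprod t q k) :=
      Summable.of_norm (summable_norm_D hq)
    have hNs : Summable (fun k : ℕ => (-1:ℂ) ^ k * q ^ brk t k * Pprod t q k) :=
      Summable.of_norm (summable_norm_N hq)
    have hD := hDs.hasSum.tendsto_sum_nat
    have hN := hNs.hasSum.tendsto_sum_nat
    set F := Phi t q 1 with hF
    have htend : Filter.Tendsto
        (fun K => F * (∑ k ∈ Finset.range K, (-1:ℂ) ^ k * Pprod t q k)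
          - ∑ k ∈ Finset.range K, (-1:ℂ) ^ k * q ^ brk t k * Pprod t q k)
        Filter.atTop (nhds (F * Dfun t q - Nfun t q)) :=
      (hD.const_mul F).sub hN
    set C := ‖F‖ + ∑' s : BS t, ‖q‖ ^ (s.1).sum with hC
    have hzero : Filter.Tendsto
        (fun K => (-1:ℂ) ^ (K+1) * Pprod t q K * (F - Phi t q (q ^ brk t K)))
        Filter.atTop (nhds 0) := by
      refine squeeze_zero_norm (a := fun K => (2*‖q‖) ^ K * C) (fun K => ?_) ?_
      · rw [norm_mul, norm_mul, norm_pow, norm_neg, norm_one, one_pow, one_mul]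
        have hb1 : ‖Pprod t q K‖ ≤ (2*‖q‖) ^ K := norm_P_le hq K
        have hb2 : ‖F - Phi t q (q ^ brk t K)‖ ≤ C := by
          refine (norm_sub_le _ _).trans ?_
          rw [hC]
          gcongr
          exact norm_Phi_le hq (norm_q_pow_le_one hq _)
        exact mul_le_mul hb1 hb2 (norm_nonneg _) (by positivity)
      · have h0 := (tendsto_pow_atTop_nhds_zero_of_lt_one h2q0 h2q1).mul_const C
        simpa using h0
    have h0 : F * Dfun t q - Nfun t q = 0 :=
      tendsto_nhds_unique (Filter.Tendsto.congr (fun K => key hq K) htend) hzero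
    rw [← Phi_one hq]
    exact sub_eq_zero.mp h0
end
end

section
/- Let t ≥ 2 be an integer. For complex q with |q| < 1/2 and complex u with |u| ≤ 1, define G(q,u) := u + Σ q^{b_1+⋯+b_l} u^{t·b_l}, the sum being over all nonempty finite sequences (b_1, …, b_l) of positive integers with b_1 = 1 and b_i ≤ t·b_{i−1} for 2 ≤ i ≤ l. Then this series converges absolutely and G(q,u) − u = (q u^t/(1 − q u^t)) · (G(q,1) − G(q, q u^t)). -/
noncomputable section

/-- The generating function `G(q,u) = u + Σ_b q^(b_1+⋯+b_l) u^(t·b_l)`, the sum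
being over all nonempty bounded degree sequences `b`. -/
def Gfun (t : ℕ) (q u : ℂ) : ℂ :=
  u + ∑' b : {l : List ℕ // IsBSeq t l ∧ l ≠ []},
        q ^ (b : List ℕ).sum * u ^ (t * (b : List ℕ).getLastD 0)

namespace BSeqAux

abbrev B (t : ℕ) := {l : List ℕ // IsBSeq t l ∧ l ≠ []}

/-! ### Encoding into `List Bool` for summability -/

def enc : List ℕ → List Bool
  | [] => []
  | k :: l => true :: (List.replicate (k - 1) false ++ enc l)

lemma enc_length : ∀ {l : List ℕ}, (∀ x ∈ l, 0 < x) → (enc l).length = l.sum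
  | [], _ => rfl
  | k :: l, h => by
    have hk : 0 < k := h k (by simp)
    have ih := enc_length (l := l) (fun x hx => h x (by simp [hx]))
    simp only [enc, List.length_cons, List.length_append, List.length_replicate, ih,
      List.sum_cons]
    omega

lemma enc_head : ∀ l : List ℕ, enc l = [] ∨ (enc l).head? = some true
  | [] => Or.inl rfl
  | k :: l => Or.inr (by simp [enc])

lemma rep_aux : ∀ (m₁ : ℕ) {m₂ : ℕ} {s₁ s₂ : List Bool},
    (s₁ = [] ∨ s₁.head? = some true) → (s₂ = [] ∨ s₂.head? = some true) →
    List.replicate m₁ false ++ s₁ = List.replicate m₂ false ++ s₂ → m₁ = m₂ ∧ s₁ = s₂ := by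
  intro m₁
  induction m₁ with
  | zero =>
    intro m₂ s₁ s₂ h₁ h₂ h
    cases m₂ with
    | zero => simpa using h
    | succ m =>
      exfalso
      simp only [List.replicate_zero, List.nil_append, List.replicate_succ,
        List.cons_append] at h
      rcases h₁ with h₁ | h₁
      · simp [h₁] at h
      · rw [h] at h₁; simp at h₁
  | succ m ih =>
    intro m₂ s₁ s₂ h₁ h₂ h
    cases m₂ with
    | zero =>
      exfalso
      simp only [List.replicate_zero, List.nil_append, List.replicate_succ,
        List.cons_append] at h
      rcases h₂ with h₂ | h₂
      · simp [h₂] at h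
      · rw [← h] at h₂; simp at h₂
    | succ m₂ =>
      simp only [List.replicate_succ, List.cons_append, List.cons.injEq, true_and] at h
      obtain ⟨e1, e2⟩ := ih h₁ h₂ h
      exact ⟨by omega, e2⟩

lemma enc_inj : ∀ {l₁ l₂ : List ℕ}, (∀ x ∈ l₁, 0 < x) → (∀ x ∈ l₂, 0 < x) →
    enc l₁ = enc l₂ → l₁ = l₂
  | [], [], _, _, _ => rfl
  | [], k :: l, _, _, h => by simp [enc] at h
  | k :: l, [], _, _, h => by simp [enc] at h
  | k₁ :: l₁, k₂ :: l₂, h₁, h₂, h => by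
    simp only [enc, List.cons.injEq, true_and] at h
    obtain ⟨e1, e2⟩ := rep_aux _ (enc_head l₁) (enc_head l₂) h
    have hk₁ : 0 < k₁ := h₁ k₁ (by simp)
    have hk₂ : 0 < k₂ := h₂ k₂ (by simp)
    have : k₁ = k₂ := by omega
    subst this
    rw [enc_inj (fun x hx => h₁ x (by simp [hx])) (fun x hx => h₂ x (by simp [hx])) e2]

lemma summable_pow_length {r : ℝ} (h0 : 0 ≤ r) (hr : r < 1 / 2) :
    Summable (fun w : List Bool => r ^ w.length) := by
  have h2 : Summable (fun n : ℕ => (2 * r) ^ n) :=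
    summable_geometric_of_lt_one (by positivity) (by linarith)
  have hs : Summable (fun σ : Σ n : ℕ, Fin n → Bool => r ^ σ.1) := by
    apply (summable_sigma_of_nonneg (fun _ => by positivity)).2
    constructor
    · intro n; exact Summable.of_finite
    · apply h2.congr
      intro n
      rw [tsum_fintype]
      simp only [Finset.sum_const, Finset.card_univ, Fintype.card_fun,
        Fintype.card_bool, Fintype.card_fin, nsmul_eq_mul, mul_pow]
      push_cast
      ring
  have := (List.equivSigmaTuple (α := Bool)).summable_iff.2 hs
  exact this

lemma summable_norm (t : ℕ) {q u : ℂ} (hq : ‖q‖ < 1 / 2) (hu : ‖u‖ ≤ 1) :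
    Summable (fun b : B t => ‖q ^ (b : List ℕ).sum * u ^ (t * (b : List ℕ).getLastD 0)‖) := by
  have hg := summable_pow_length (norm_nonneg q) hq
  have hinj : Function.Injective (fun b : B t => enc b.1) := by
    intro a b hab
    exact Subtype.ext (enc_inj a.2.1.1 b.2.1.1 hab)
  have hcomp := hg.comp_injective hinj
  apply hcomp.of_nonneg_of_le (fun b => norm_nonneg _)
  intro b
  rw [norm_mul, norm_pow, norm_pow]
  calc ‖q‖ ^ (b : List ℕ).sum * ‖u‖ ^ (t * (b : List ℕ).getLastD 0)
      ≤ ‖q‖ ^ (b : List ℕ).sum * 1 :=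
        mul_le_mul_of_nonneg_left (pow_le_one₀ (norm_nonneg u) hu)
          (pow_nonneg (norm_nonneg q) _)
    _ = ‖q‖ ^ (enc (b : List ℕ)).length := by rw [mul_one, enc_length b.2.1.1]

/-! ### The structural bijection -/

lemma getLastD_eq_getElem {l : List ℕ} (h : l ≠ []) (hlen : l.length - 1 < l.length) :
    l.getLastD 0 = l[l.length - 1] := by
  rw [List.getLastD_eq_getLast?, List.getLast?_eq_getLast h, List.getLast_eq_getElem]
  rfl

def one (t : ℕ) : B t :=
  ⟨[1], ⟨⟨by simp, by simp, by intro i h; simp at h⟩, by simp⟩⟩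

lemma isBSeq_append {t : ℕ} (l : List ℕ) (hl : IsBSeq t l) (hne : l ≠ []) (m : ℕ)
    (hm1 : 0 < m) (hm : m ≤ t * l.getLastD 0) : IsBSeq t (l ++ [m]) := by
  obtain ⟨h1, h2, h3⟩ := hl
  obtain ⟨a, l', rfl⟩ := List.exists_cons_of_ne_nil hne
  refine ⟨?_, ?_, ?_⟩
  · intro x hx
    rcases List.mem_append.1 hx with hx | hx
    · exact h1 x hx
    · simp at hx; omega
  · intro _; simpa using h2 (by simp)
  · intro i h
    simp only [List.length_append, List.length_cons, List.length_nil] at h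
    simp only [List.get_eq_getElem]
    set L := a :: l' with hL
    have hLlen : L.length = l'.length + 1 := by simp [hL]
    by_cases hi : i + 1 < L.length
    · rw [List.getElem_append_left hi, List.getElem_append_left (Nat.lt_of_succ_lt hi)]
      have := h3 i hi
      simpa using this
    · have hieq : i + 1 = L.length := by omega
      have hi' : i < L.length := by omega
      rw [List.getElem_append_left hi']
      have : (L ++ [m])[i+1] = m := by
        rw [List.getElem_append_right (by omega)]
        simp [hieq]
      rw [this]
      have hlast : L.getLastD 0 = L[i] := by
        rw [getLastD_eq_getElem (by simp [hL]) (by omega)]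
        congr 1
        omega
      rw [← hlast]
      exact hm

lemma length_one_eq {t : ℕ} (x : B t) (h : x.1.length = 1) : x = one t := by
  obtain ⟨l, ⟨⟨h1, h2, h3⟩, hne⟩⟩ := x
  obtain ⟨a, l', rfl⟩ := List.exists_cons_of_ne_nil hne
  have : l' = [] := by simpa using h
  subst this
  have : a = 1 := by simpa using h2 (by simp)
  subst this
  rfl

lemma two_le_length {t : ℕ} (x : B t) (h : x ≠ one t) : 2 ≤ x.1.length := by
  rcases Nat.lt_or_ge x.1.length 2 with h2 | h2
  · exfalso
    have h0 : x.1.length ≠ 0 := fun hh => x.2.2 (List.length_eq_zero_iff.mp hh)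
    exact h (length_one_eq x (by omega))
  · exact h2

lemma isBSeq_dropLast {t : ℕ} (x : B t) (h2 : 2 ≤ x.1.length) :
    IsBSeq t x.1.dropLast ∧ x.1.dropLast ≠ [] := by
  obtain ⟨l, ⟨⟨h1, hh, h3⟩, hne⟩⟩ := x
  simp only at h2 ⊢
  have hdl : l.dropLast.length = l.length - 1 := List.length_dropLast
  have hdne : l.dropLast ≠ [] := by
    intro h
    have h0 : l.dropLast.length = 0 := by rw [h]; rfl
    omega
  refine ⟨⟨?_, ?_, ?_⟩, hdne⟩
  · intro x hx
    exact h1 x (List.dropLast_sublist l |>.mem hx)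
  · intro _
    obtain ⟨a, l', rfl⟩ := List.exists_cons_of_ne_nil hne
    have : l' ≠ [] := by intro h; subst h; simp at h2
    obtain ⟨b, l'', rfl⟩ := List.exists_cons_of_ne_nil this
    simpa using hh (by simp)
  · intro i h
    simp only [List.get_eq_getElem]
    have hi1 : i + 1 < l.length := by omega
    rw [List.getElem_dropLast, List.getElem_dropLast]
    simpa using h3 i hi1

lemma getLast_pos {t : ℕ} (x : B t) : 0 < x.1.getLastD 0 := by
  obtain ⟨l, ⟨⟨h1, _, _⟩, hne⟩⟩ := x
  have := List.getLast_mem hne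
  have h := h1 _ this
  rw [List.getLastD_eq_getLast?, List.getLast?_eq_getLast hne]
  exact h

lemma fin_bound {t : ℕ} (x : B t) (h2 : 2 ≤ x.1.length) :
    x.1.getLastD 0 - 1 < t * (x.1.dropLast.getLastD 0) := by
  obtain ⟨l, ⟨⟨h1, hh, h3⟩, hne⟩⟩ := x
  simp only at h2 ⊢
  have hlen : l.length - 1 < l.length := by omega
  have hL : l.getLastD 0 = l[l.length - 1] := getLastD_eq_getElem hne hlen
  have hdl : l.dropLast.length = l.length - 1 := List.length_dropLast
  have hdne' : l.dropLast ≠ [] := by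
    intro h
    have h0 : l.dropLast.length = 0 := by rw [h]; rfl
    omega
  have hL' : l.dropLast.getLastD 0 = l[l.length - 2] := by
    rw [getLastD_eq_getElem hdne' (by omega), List.getElem_dropLast]
    congr 1
    omega
  have hcond := h3 (l.length - 2) (by omega)
  simp only [List.get_eq_getElem,
    show l.length - 2 + 1 = l.length - 1 from by omega] at hcond
  have hpos : 0 < l[l.length - 1] := h1 _ (List.getElem_mem _)
  rw [hL, hL']
  omega

lemma sigma_eq {t : ℕ} (b b' : B t) (i : Fin (t * (b : List ℕ).getLastD 0))
    (i' : Fin (t * (b' : List ℕ).getLastD 0)) (h : b = b') (h2 : (i : ℕ) = (i' : ℕ)) :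
    (⟨b, i⟩ : Σ b : B t, Fin (t * (b : List ℕ).getLastD 0)) = ⟨b', i'⟩ := by
  subst h
  exact congrArg _ (Fin.ext h2)

def E (t : ℕ) : (Σ b : B t, Fin (t * (b : List ℕ).getLastD 0)) ≃ {x : B t // x ≠ one t} where
  toFun σ :=
    ⟨⟨σ.1.1 ++ [σ.2.1 + 1],
      ⟨isBSeq_append σ.1.1 σ.1.2.1 σ.1.2.2 _ (Nat.succ_pos _) (Nat.succ_le_of_lt σ.2.2),
       by simp⟩⟩,
      by
        intro h
        have hlen := congrArg (fun x : B t => x.1.length) h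
        simp only [one, List.length_append, List.length_cons, List.length_nil] at hlen
        exact σ.1.2.2 (List.eq_nil_of_length_eq_zero (by omega))⟩
  invFun x :=
    ⟨⟨x.1.1.dropLast, (isBSeq_dropLast x.1 (two_le_length x.1 x.2)).1,
      (isBSeq_dropLast x.1 (two_le_length x.1 x.2)).2⟩,
     ⟨x.1.1.getLastD 0 - 1, fin_bound x.1 (two_le_length x.1 x.2)⟩⟩
  left_inv σ := by
    obtain ⟨⟨l, hl⟩, i⟩ := σ
    have h1 : ((l ++ [(i : ℕ) + 1]).dropLast : List ℕ) = l := List.dropLast_concat ..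
    have h2 : (l ++ [(i : ℕ) + 1]).getLastD 0 = (i : ℕ) + 1 := by
      rw [List.getLastD_eq_getLast?, List.getLast?_concat]
      rfl
    exact sigma_eq _ _ _ _ (Subtype.ext h1) (by simp [h2])
  right_inv x := by
    obtain ⟨⟨l, hl⟩, hx⟩ := x
    have h2 : 2 ≤ l.length := two_le_length ⟨l, hl⟩ hx
    have hne : l ≠ [] := hl.2
    have hpos : 0 < l.getLastD 0 := getLast_pos ⟨l, hl⟩
    apply Subtype.ext
    apply Subtype.ext
    show l.dropLast ++ [l.getLastD 0 - 1 + 1] = l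
    have : l.getLastD 0 - 1 + 1 = l.getLastD 0 := by omega
    rw [this, List.getLastD_eq_getLast?, List.getLast?_eq_getLast hne]
    exact List.dropLast_append_getLast hne

/-! ### The functional equation -/

def F (t : ℕ) (q w : ℂ) (b : B t) : ℂ := q ^ (b : List ℕ).sum * w ^ (t * (b : List ℕ).getLastD 0)

end BSeqAux

open BSeqAux in
theorem stmt_1 (t : ℕ) (ht : 2 ≤ t) (q u : ℂ) (hq : ‖q‖ < 1 / 2) (hu : ‖u‖ ≤ 1) :
    Summable (fun b : {l : List ℕ // IsBSeq t l ∧ l ≠ []} =>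
      ‖q ^ (b : List ℕ).sum * u ^ (t * (b : List ℕ).getLastD 0)‖) ∧
    Gfun t q u - u =
      q * u ^ t / (1 - q * u ^ t) * (Gfun t q 1 - Gfun t q (q * u ^ t)) := by
  refine ⟨summable_norm t hq hu, ?_⟩
  set v : ℂ := q * u ^ t with hv
  have hvn : ‖v‖ < 1 / 2 := by
    rw [hv, norm_mul, norm_pow]
    calc ‖q‖ * ‖u‖ ^ t ≤ ‖q‖ * 1 := by
          gcongr
          exact pow_le_one₀ (norm_nonneg u) hu
      _ < 1 / 2 := by rwa [mul_one]
  have hvle : ‖v‖ ≤ 1 := by linarith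
  have hvne1 : v ≠ 1 := by
    intro h; rw [h] at hvn; simp at hvn; linarith
  have hv1 : (1 : ℂ) - v ≠ 0 := sub_ne_zero.2 (Ne.symm hvne1)
  have hv1' : v - 1 ≠ 0 := sub_ne_zero.2 hvne1
  have Su : Summable (F t q u) := (summable_norm t hq hu).of_norm
  have S1 : Summable (F t q 1) := (summable_norm t hq (by norm_num)).of_norm
  have Sv : Summable (F t q v) := (summable_norm t hq hvle).of_norm
  -- decompose the sum
  have hGu : Gfun t q u - u = ∑' b : B t, F t q u b := by simp [Gfun, F]
  have hG1 : Gfun t q 1 = 1 + ∑' b : B t, F t q 1 b := by simp [Gfun, F]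
  have hGv : Gfun t q v = v + ∑' b : B t, F t q v b := by simp [Gfun, F]
  have hFone : F t q u (one t) = v := by simp [F, one, hv, pow_mul]
  -- split off the singleton
  have hsplit : ∑' b : B t, F t q u b
      = F t q u (one t) + ∑' x : ↑((↑({one t} : Finset (B t)) : Set (B t))ᶜ), F t q u x := by
    rw [← Summable.sum_add_tsum_compl (s := ({one t} : Finset (B t))) Su, Finset.sum_singleton]
  -- convert the complement sum through the equiv
  have htail : ∑' x : ↑((↑({one t} : Finset (B t)) : Set (B t))ᶜ), F t q u x
      = ∑' σ : Σ b : B t, Fin (t * (b : List ℕ).getLastD 0), F t q u ((E t σ) : B t) := by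
    rw [← ((E t).trans
      (Equiv.subtypeEquivRight (q := fun x : B t => x ∈ ((↑({one t} : Finset (B t)) : Set (B t))ᶜ))
        (fun x => by simp)).symm.symm).tsum_eq (f := fun x => F t q u (x : B t))]
    exact tsum_congr fun σ => rfl
  -- summability over the sigma type
  have hSig : Summable (fun σ : (Σ b : B t, Fin (t * (b : List ℕ).getLastD 0)) =>
      F t q u ((E t σ) : B t)) := by
    have h1 : Summable (fun x : {x : B t // x ≠ one t} => F t q u (x : B t)) := by
      apply Su.comp_injective Subtype.val_injective
    exact h1.comp_injective (E t).injective
  -- the term formula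
  have hterm : ∀ (b : B t) (i : Fin (t * (b : List ℕ).getLastD 0)),
      F t q u ((E t ⟨b, i⟩) : B t) = q ^ (b : List ℕ).sum * v ^ ((i : ℕ) + 1) := by
    intro b i
    show q ^ ((b : List ℕ) ++ [(i : ℕ) + 1]).sum
        * u ^ (t * ((b : List ℕ) ++ [(i : ℕ) + 1]).getLastD 0)
      = q ^ (b : List ℕ).sum * v ^ ((i : ℕ) + 1)
    have h2 : ((b : List ℕ) ++ [(i : ℕ) + 1]).getLastD 0 = (i : ℕ) + 1 := by
      rw [List.getLastD_eq_getLast?, List.getLast?_concat]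
      rfl
    rw [List.sum_append, h2, hv]
    simp only [List.sum_cons, List.sum_nil, add_zero]
    rw [pow_add, mul_pow, ← pow_mul]
    ring
  -- compute the inner sums
  have hinner : ∀ b : B t, ∑' i : Fin (t * (b : List ℕ).getLastD 0), F t q u ((E t ⟨b, i⟩) : B t)
      = (v / (v - 1)) * (F t q v b - F t q 1 b) := by
    intro b
    rw [tsum_fintype]
    rw [Finset.sum_congr rfl (fun i _ => hterm b i)]
    rw [← Finset.mul_sum]
    have hgeo : ∑ i : Fin (t * (b : List ℕ).getLastD 0), v ^ ((i : ℕ) + 1)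
        = v * ((v ^ (t * (b : List ℕ).getLastD 0) - 1) / (v - 1)) := by
      rw [Fin.sum_univ_eq_sum_range (fun i => v ^ (i + 1))]
      have : ∀ i ∈ Finset.range (t * (b : List ℕ).getLastD 0), v ^ (i + 1) = v * v ^ i := by
        intro i _; ring
      rw [Finset.sum_congr rfl this, ← Finset.mul_sum, geom_sum_eq hvne1]
    rw [hgeo, F, F]
    rw [one_pow]
    field_simp
  -- put it together
  have hsigma : ∑' σ : Σ b : B t, Fin (t * (b : List ℕ).getLastD 0), F t q u ((E t σ) : B t)
      = (v / (v - 1)) * ((∑' b : B t, F t q v b) - ∑' b : B t, F t q 1 b) := by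
    rw [Summable.tsum_sigma hSig]
    rw [tsum_congr hinner]
    rw [tsum_mul_left, Summable.tsum_sub Sv S1]
  rw [hGu, hG1, hGv, hsplit, htail, hsigma, hFone]
  field_simp
  ring
end
end

section
/- Let t ≥ 2 be an integer, K ≥ 0 an integer, and q a complex number with |q|^{[K+1]} < 1/2. Then |N(q) − N_K(q)| ≤ ((1 − |q|^{[K+1]})/(1 − 2|q|^{[K+1]})) · (Π_{j=1}^{K} 1/(1 − |q|^{[j]})) · |q|^{[K] + Σ_{j=1}^{K} [j]} and |D(q) − D_K(q)| ≤ ((1 − |q|^{[K+1]})/(1 − 2|q|^{[K+1]})) · (Π_{j=1}^{K} 1/(1 − |q|^{[j]})) · |q|^{Σ_{j=1}^{K} [j]}. -/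
noncomputable section

/-- Partial sum `N_K(q)`. -/
def NK (t K : ℕ) (q : ℂ) : ℂ :=
  ∑ k ∈ Finset.range K, (-1 : ℂ) ^ k * q ^ brk t k * ∏ j ∈ Finset.Icc 1 k, ff t q j

/-- Partial sum `D_K(q)`. -/
def DK (t K : ℕ) (q : ℂ) : ℂ :=
  ∑ k ∈ Finset.range K, (-1 : ℂ) ^ k * ∏ j ∈ Finset.Icc 1 k, ff t q j

lemma brk_pos (t : ℕ) {j : ℕ} (hj : 1 ≤ j) : 0 < brk t j := by
  have h : (t : ℕ) ^ 0 ≤ brk t j :=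
    Finset.single_le_sum (f := fun i => t ^ i) (fun i _ => Nat.zero_le _)
      (Finset.mem_range.mpr hj)
  have h' : 1 ≤ brk t j := by simpa using h
  exact h'

lemma brk_mono (t : ℕ) : Monotone (brk t) := fun j k h =>
  Finset.sum_le_sum_of_subset (Finset.range_subset_range.mpr h)

lemma key (t : ℕ) (K : ℕ) (q : ℂ) (hq : ‖q‖ ^ brk t (K + 1) < 1 / 2)
    (c : ℕ → ℂ) (B : ℝ) (hB : 0 ≤ B) (hc : ∀ k, K ≤ k → ‖c k‖ ≤ B) :
    ‖(∑' k : ℕ, (-1 : ℂ) ^ k * c k * ∏ j ∈ Finset.Icc 1 k, ff t q j) -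
        ∑ k ∈ Finset.range K, (-1 : ℂ) ^ k * c k * ∏ j ∈ Finset.Icc 1 k, ff t q j‖ ≤
      (1 - ‖q‖ ^ brk t (K + 1)) / (1 - 2 * ‖q‖ ^ brk t (K + 1)) *
        (∏ j ∈ Finset.Icc 1 K, (1 - ‖q‖ ^ brk t j)⁻¹) * B *
        ‖q‖ ^ (∑ j ∈ Finset.Icc 1 K, brk t j) := by
  set r := ‖q‖ with hr
  have hr0 : 0 ≤ r := norm_nonneg q
  have hr1 : r < 1 := by
    by_contra h
    push_neg at h
    have := one_le_pow₀ h (n := brk t (K + 1))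
    linarith
  set x := r ^ brk t (K + 1) with hxdef
  have hx0 : 0 ≤ x := pow_nonneg hr0 _
  have hx : x < 1 / 2 := hq
  have h1x : 0 < 1 - x := by linarith
  have h12x : 0 < 1 - 2 * x := by linarith
  set ρ := x / (1 - x) with hρdef
  have hρ0 : 0 ≤ ρ := div_nonneg hx0 h1x.le
  have hρ1 : ρ < 1 := (div_lt_one h1x).mpr (by linarith)
  have hlt : ∀ j : ℕ, 1 ≤ j → r ^ brk t j < 1 := fun j hj =>
    pow_lt_one₀ hr0 hr1 (brk_pos t hj).ne'
  have hff : ∀ j : ℕ, 1 ≤ j → ‖ff t q j‖ ≤ r ^ brk t j / (1 - r ^ brk t j) := by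
    intro j hj
    have hjlt := hlt j hj
    have hd : 1 - r ^ brk t j ≤ ‖1 - q ^ brk t j‖ := by
      calc 1 - r ^ brk t j = ‖(1 : ℂ)‖ - ‖q ^ brk t j‖ := by simp [hr, norm_pow]
        _ ≤ ‖1 - q ^ brk t j‖ := norm_sub_norm_le _ _
    rw [ff, norm_div, norm_pow, ← hr]
    exact div_le_div₀ (pow_nonneg hr0 _) le_rfl (by linarith) hd
  have hffρ : ∀ j : ℕ, K + 1 ≤ j → ‖ff t q j‖ ≤ ρ := by
    intro j hj
    have hx1 : r ^ brk t j ≤ x :=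
      pow_le_pow_of_le_one hr0 hr1.le (brk_mono t hj)
    have hjlt := hlt j (le_trans (by omega) hj)
    refine (hff j (by omega)).trans ?_
    exact div_le_div₀ hx0 hx1 h1x (by linarith)
  set term : ℕ → ℂ := fun k => (-1 : ℂ) ^ k * c k * ∏ j ∈ Finset.Icc 1 k, ff t q j with hterm_def
  have hPinv : 0 ≤ ∏ j ∈ Finset.Icc 1 K, (1 - r ^ brk t j)⁻¹ := by
    apply Finset.prod_nonneg
    intro j hj
    have := hlt j (Finset.mem_Icc.mp hj).1
    exact inv_nonneg.mpr (by linarith)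
  set D0 : ℝ := (∏ j ∈ Finset.Icc 1 K, (1 - r ^ brk t j)⁻¹) * B *
    r ^ (∑ j ∈ Finset.Icc 1 K, brk t j) with hD0def
  have hterm : ∀ i : ℕ, ‖term (i + K)‖ ≤ D0 * ρ ^ i := by
    intro i
    have hKle : K ≤ i + K := Nat.le_add_left K i
    have hsplit : (∏ j ∈ Finset.Ioc 0 K, ‖ff t q j‖) *
        ∏ j ∈ Finset.Ioc K (i + K), ‖ff t q j‖ = ∏ j ∈ Finset.Ioc 0 (i + K), ‖ff t q j‖ :=
      Finset.prod_Ioc_consecutive _ (Nat.zero_le K) hKle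
    have hIcc : ∀ n : ℕ, Finset.Icc 1 n = Finset.Ioc 0 n := fun n => Finset.Icc_add_one_left_eq_Ioc 0 n
    have hP1 : ∏ j ∈ Finset.Ioc 0 K, ‖ff t q j‖ ≤
        r ^ (∑ j ∈ Finset.Icc 1 K, brk t j) * ∏ j ∈ Finset.Icc 1 K, (1 - r ^ brk t j)⁻¹ := by
      rw [← Finset.prod_pow_eq_pow_sum, hIcc, ← Finset.prod_mul_distrib]
      apply Finset.prod_le_prod (fun j _ => norm_nonneg _)
      intro j hj
      have hj1 : 1 ≤ j := (Finset.mem_Ioc.mp hj).1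
      rw [← div_eq_mul_inv]
      exact hff j hj1
    have hP2 : ∏ j ∈ Finset.Ioc K (i + K), ‖ff t q j‖ ≤ ρ ^ i := by
      calc ∏ j ∈ Finset.Ioc K (i + K), ‖ff t q j‖ ≤ ∏ _j ∈ Finset.Ioc K (i + K), ρ :=
            Finset.prod_le_prod (fun j _ => norm_nonneg _)
              (fun j hj => hffρ j (Finset.mem_Ioc.mp hj).1)
        _ = ρ ^ i := by rw [Finset.prod_const, Nat.card_Ioc, Nat.add_sub_cancel]
    have hcB : ‖c (i + K)‖ ≤ B := hc _ hKle
    have hP1nn : 0 ≤ ∏ j ∈ Finset.Ioc 0 K, ‖ff t q j‖ :=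
      Finset.prod_nonneg fun j _ => norm_nonneg _
    calc ‖term (i + K)‖ = ‖c (i + K)‖ * ∏ j ∈ Finset.Ioc 0 (i + K), ‖ff t q j‖ := by
          rw [hterm_def]
          simp [norm_mul, norm_prod, hIcc]
      _ = ‖c (i + K)‖ * ((∏ j ∈ Finset.Ioc 0 K, ‖ff t q j‖) *
            ∏ j ∈ Finset.Ioc K (i + K), ‖ff t q j‖) := by rw [hsplit]
      _ ≤ B * ((r ^ (∑ j ∈ Finset.Icc 1 K, brk t j) *
            ∏ j ∈ Finset.Icc 1 K, (1 - r ^ brk t j)⁻¹) * ρ ^ i) := by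
          apply mul_le_mul hcB _ (mul_nonneg hP1nn (Finset.prod_nonneg fun j _ => norm_nonneg _)) hB
          exact mul_le_mul hP1 hP2 (Finset.prod_nonneg fun j _ => norm_nonneg _)
            (mul_nonneg (pow_nonneg hr0 _) hPinv)
      _ = D0 * ρ ^ i := by rw [hD0def]; ring
  have hsum : Summable term := by
    rw [← summable_nat_add_iff K]
    exact Summable.of_norm_bounded ((summable_geometric_of_lt_one hρ0 hρ1).mul_left D0) hterm
  have heq : (∑' k : ℕ, term k) - ∑ k ∈ Finset.range K, term k = ∑' i : ℕ, term (i + K) := by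
    rw [← hsum.sum_add_tsum_nat_add K]
    ring
  have hbound : ‖∑' i : ℕ, term (i + K)‖ ≤ D0 * (1 - ρ)⁻¹ :=
    tsum_of_norm_bounded ((hasSum_geometric_of_lt_one hρ0 hρ1).mul_left D0) hterm
  have hfin : D0 * (1 - ρ)⁻¹ = (1 - x) / (1 - 2 * x) *
      (∏ j ∈ Finset.Icc 1 K, (1 - r ^ brk t j)⁻¹) * B *
      r ^ (∑ j ∈ Finset.Icc 1 K, brk t j) := by
    have h1 : 1 - ρ = (1 - 2 * x) / (1 - x) := by
      rw [hρdef]; field_simp; ring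
    rw [h1, inv_div, hD0def]; ring
  calc ‖(∑' k : ℕ, term k) - ∑ k ∈ Finset.range K, term k‖
      = ‖∑' i : ℕ, term (i + K)‖ := by rw [heq]
    _ ≤ D0 * (1 - ρ)⁻¹ := hbound
    _ = _ := hfin


theorem stmt_2 (t : ℕ) (ht : 2 ≤ t) (K : ℕ) (q : ℂ)
    (hq : ‖q‖ ^ brk t (K + 1) < 1 / 2) :
    ‖Nfun t q - NK t K q‖ ≤
      (1 - ‖q‖ ^ brk t (K + 1)) / (1 - 2 * ‖q‖ ^ brk t (K + 1)) *
        (∏ j ∈ Finset.Icc 1 K, (1 - ‖q‖ ^ brk t j)⁻¹) *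
        ‖q‖ ^ (brk t K + ∑ j ∈ Finset.Icc 1 K, brk t j) ∧
    ‖Dfun t q - DK t K q‖ ≤
      (1 - ‖q‖ ^ brk t (K + 1)) / (1 - 2 * ‖q‖ ^ brk t (K + 1)) *
        (∏ j ∈ Finset.Icc 1 K, (1 - ‖q‖ ^ brk t j)⁻¹) *
        ‖q‖ ^ (∑ j ∈ Finset.Icc 1 K, brk t j) := by
  have hr0 : 0 ≤ ‖q‖ := norm_nonneg q
  have hr1 : ‖q‖ < 1 := by
    by_contra h
    push_neg at h
    have := one_le_pow₀ h (n := brk t (K + 1))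
    linarith
  constructor
  · have h := key t K q hq (fun k => q ^ brk t k) (‖q‖ ^ brk t K)
      (pow_nonneg hr0 _)
      (fun k hk => by
        rw [norm_pow]
        exact pow_le_pow_of_le_one hr0 hr1.le (brk_mono t hk))
    rw [pow_add]
    calc ‖Nfun t q - NK t K q‖ ≤
        (1 - ‖q‖ ^ brk t (K + 1)) / (1 - 2 * ‖q‖ ^ brk t (K + 1)) *
          (∏ j ∈ Finset.Icc 1 K, (1 - ‖q‖ ^ brk t j)⁻¹) * ‖q‖ ^ brk t K *
          ‖q‖ ^ (∑ j ∈ Finset.Icc 1 K, brk t j) := h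
      _ = _ := by ring
  · have h := key t K q hq (fun _ => 1) 1 zero_le_one (fun k _ => by simp)
    simp only [mul_one] at h
    simp only [Dfun, DK]
    exact h
end
end

section
/- Let t ≥ 30 be an integer and let q be a complex number with 1/2 ≤ |q| ≤ 1/r₃, where r₃ := 1 + (log 2)/t − (log 2 − log² 2)/(2t²). Then |D′(q) − D₄′(q)| ≤ 2^{−t²}, where D′ and D₄′ denote the complex derivatives of D and of the partial sum D₄. -/
noncomputable section

/-- Partial sum `D_4(q)`. -/
def D4 (t : ℕ) (q : ℂ) : ℂ :=
  ∑ k ∈ Finset.range 4, (-1 : ℂ) ^ k * ∏ j ∈ Finset.Icc 1 k, ff t q j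

/-- `r₃ = 1 + log 2 / t - (log 2 - log² 2)/(2t²)`. -/
def r3 (t : ℕ) : ℝ :=
  1 + Real.log 2 / t - (Real.log 2 - (Real.log 2) ^ 2) / (2 * t ^ 2)

open Finset Metric

lemma aux0 : ∀ n : ℕ, 30 ≤ n → 100000 * (n : ℝ)^2 ≤ 2 ^ n := by
  intro n hn
  induction n, hn using Nat.le_induction with
  | base => norm_num
  | succ n hn ih =>
    have hn' : (30 : ℝ) ≤ (n : ℝ) := by exact_mod_cast hn
    push_cast
    rw [pow_succ]
    ring_nf
    ring_nf at ih
    nlinarith [ih, sq_nonneg ((n:ℝ) - 3)]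

lemma aux1 : ∀ n : ℕ, 30 ≤ n → 37 * (n : ℝ) ≤ 10 * Real.exp ((19/100) * n) := by
  intro n hn
  induction n, hn using Nat.le_induction with
  | base =>
    have h5 : Real.exp (5:ℝ) ≤ Real.exp ((19/100) * ((30:ℕ):ℝ)) :=
      Real.exp_le_exp.2 (by norm_num)
    have he : (2.7182818283 : ℝ) ^ (5:ℕ) ≤ Real.exp (5:ℝ) := by
      calc (2.7182818283 : ℝ) ^ (5:ℕ) ≤ Real.exp 1 ^ (5:ℕ) :=
            pow_le_pow_left₀ (by norm_num) Real.exp_one_gt_d9.le 5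
        _ = Real.exp (5:ℝ) := by
            rw [← Real.exp_nat_mul]; norm_num
    have : (148:ℝ) ≤ Real.exp (5:ℝ) := by nlinarith [he]
    push_cast at h5 ⊢
    linarith
  | succ n hn ih =>
    have hn' : (30 : ℝ) ≤ (n : ℝ) := by exact_mod_cast hn
    have hmul : Real.exp ((19/100) * ((n:ℝ)+1)) = Real.exp ((19/100) * n) * Real.exp (19/100) := by
      rw [← Real.exp_add]; ring_nf
    have he : (1:ℝ) + 19/100 ≤ Real.exp (19/100) := by
      have := Real.add_one_le_exp (19/100 : ℝ); linarith
    have hp := Real.exp_pos ((19/100) * (n:ℝ))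
    push_cast
    rw [hmul]
    nlinarith [ih]

lemma aux_quad {x : ℝ} (h0 : 0 ≤ x) (h1 : x ≤ 1/12) :
    Real.exp x ≤ 1 + x + (4/5) * x^2 := by
  have h2 : 1 - x/2 ≤ Real.exp (-(x/2)) := by
    have := Real.add_one_le_exp (-(x/2)); linarith
  have hpos : (0:ℝ) < 1 - x/2 := by linarith
  have h3 : Real.exp (x/2) * Real.exp (-(x/2)) = 1 := by
    rw [← Real.exp_add]; simp
  have h4 : Real.exp (x/2) ≤ 1/(1 - x/2) := by
    rw [le_div_iff₀ hpos]
    calc Real.exp (x/2) * (1 - x/2) ≤ Real.exp (x/2) * Real.exp (-(x/2)) :=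
          mul_le_mul_of_nonneg_left h2 (Real.exp_pos _).le
      _ = 1 := h3
  have h5 : Real.exp x = Real.exp (x/2) * Real.exp (x/2) := by
    rw [← Real.exp_add]; ring_nf
  have h6 : Real.exp x ≤ (1/(1-x/2))^2 := by
    rw [h5, sq]
    exact mul_le_mul h4 h4 (Real.exp_pos _).le (by positivity)
  refine h6.trans ?_
  rw [div_pow, one_pow, div_le_iff₀ (by positivity)]
  nlinarith [sq_nonneg x, mul_nonneg (mul_nonneg h0 h0) h0,
    mul_nonneg (mul_nonneg (mul_nonneg h0 h0) h0) h0]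

lemma aux_exp8 {x : ℝ} (h0 : 0 ≤ x) : (1 + x/8)^(8:ℕ) ≤ Real.exp x := by
  have h1 : 1 + x/8 ≤ Real.exp (x/8) := by
    have := Real.add_one_le_exp (x/8); linarith
  calc (1 + x/8)^(8:ℕ) ≤ Real.exp (x/8) ^ (8:ℕ) :=
        pow_le_pow_left₀ (by linarith) h1 8
    _ = Real.exp x := by rw [← Real.exp_nat_mul]; ring_nf

-- brk facts
lemma brk_one (t : ℕ) : brk t 1 = 1 := by simp [brk]
lemma brk_two (t : ℕ) : brk t 2 = 1 + t := by simp [brk, Finset.sum_range_succ]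
lemma brk_three (t : ℕ) : brk t 3 = 1 + t + t^2 := by
  simp [brk, Finset.sum_range_succ]
lemma brk_four (t : ℕ) : brk t 4 = 1 + t + t^2 + t^3 := by
  simp [brk, Finset.sum_range_succ]
lemma one_le_brk (t j : ℕ) (hj : 1 ≤ j) (ht : 1 ≤ t) : 1 ≤ brk t j := by
  calc 1 = ∑ i ∈ Finset.range 1, t ^ i := by simp
    _ ≤ brk t j := Finset.sum_le_sum_of_subset (Finset.range_subset_range.2 hj)
lemma brk_le_brk (t j k : ℕ) (hjk : j ≤ k) : brk t j ≤ brk t k :=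
  Finset.sum_le_sum_of_subset (Finset.range_subset_range.2 hjk)

lemma auxSb {T L : ℝ} (hT : 30 ≤ T) (hL1 : 0.6931 ≤ L) :
    (L*T^2 + 0.886*T)*(2*T^2) ≤ (T^3+2*T^2+2*T+2)*(2*T*L-1) := by
  have hT0 : (0:ℝ) < T := by linarith
  have hsq : (900:ℝ) ≤ T^2 := by nlinarith
  have hcube : (27000:ℝ) ≤ T^3 := by nlinarith
  nlinarith [mul_le_mul_of_nonneg_right hL1 (by positivity : (0:ℝ) ≤ T^3),
    mul_le_mul_of_nonneg_right hL1 (by positivity : (0:ℝ) ≤ T^2),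
    mul_le_mul_of_nonneg_right hL1 hT0.le, hcube, hsq, hT]

lemma auxSmallDiv {x : ℝ} (hxpos : 0 < x) (hx1 : x ≤ 1/1000000) :
    x/(1-x) ≤ 1.01 * x := by
  rw [div_le_iff₀ (by linarith)]
  nlinarith

set_option maxHeartbeats 2000000 in
theorem stmt_3 (t : ℕ) (ht : 30 ≤ t) (q : ℂ)
    (hq1 : 1 / 2 ≤ ‖q‖) (hq2 : ‖q‖ ≤ 1 / r3 t) :
    ‖deriv (Dfun t) q - deriv (D4 t) q‖ ≤ 1 / 2 ^ (t ^ 2) := by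
  have hT : (30:ℝ) ≤ (t:ℝ) := by exact_mod_cast ht
  set T : ℝ := (t:ℝ) with hTdef
  have hT0 : (0:ℝ) < T := by linarith
  set L : ℝ := Real.log 2 with hLdef
  have hL1 : (0.6931:ℝ) ≤ L := by
    have := Real.log_two_gt_d9; rw [hLdef]; norm_num at this ⊢; linarith
  have hL2 : L ≤ 0.6932 := by
    have := Real.log_two_lt_d9; rw [hLdef]; norm_num at this ⊢; linarith
  set β : ℝ := L/T - 1/(2*T^2) with hβdef
  set ρ : ℝ := ((1:ℝ)/2)^t with hρdef
  have hρpos : 0 < ρ := by positivity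
  have hρle : 100000 * T^2 * ρ ≤ 1 := by
    have h := aux0 t ht
    have h2 : ρ * 2^t = 1 := by
      rw [hρdef, div_pow, one_pow, div_mul_cancel₀]
      positivity
    calc 100000 * T^2 * ρ ≤ 2^t * ρ := by
          apply mul_le_mul_of_nonneg_right h hρpos.le
      _ = 1 := by rw [mul_comm]; exact h2
  have hβeq : β = (2*T*L - 1)/(2*T^2) := by
    rw [hβdef]; field_simp
  have hβlb : 0.676/T ≤ β := by
    rw [hβeq, div_le_div_iff₀ hT0 (by positivity)]
    nlinarith
  have hβub1 : β ≤ 0.7/T := by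
    rw [hβeq, div_le_div_iff₀ (by positivity) hT0]
    nlinarith
  have hβub2 : β ≤ 7/300 := by
    refine hβub1.trans ?_
    rw [div_le_div_iff₀ hT0 (by norm_num)]
    nlinarith
  have hβpos : 0 < β := lt_of_lt_of_le (by positivity) hβlb
  set Rb : ℝ := Real.exp (-β) with hRbdef
  have hRbpos : 0 < Rb := Real.exp_pos _
  have hRb1 : Rb < 1 := by
    rw [hRbdef, show (1:ℝ) = Real.exp 0 from (Real.exp_zero).symm]
    exact Real.exp_lt_exp.2 (by linarith)
  have hr3val : r3 t = 1 + L/T - (L - L^2)/(2*T^2) := rfl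
  have hLL : L - L^2 ≤ 0.2128 := by nlinarith
  have hLLpos : 0 ≤ L - L^2 := by nlinarith
  have hr3ub : r3 t ≤ 1.024 := by
    rw [hr3val]
    have h1 : L/T ≤ 0.6932/30 := div_le_div₀ (by norm_num) hL2 (by norm_num) hT
    have h2 : 0 ≤ (L - L^2)/(2*T^2) := div_nonneg hLLpos (by positivity)
    norm_num at h1 ⊢
    linarith
  have hr3lb1 : 1 ≤ r3 t := by
    rw [hr3val]
    have h1 : (L - L^2)/(2*T^2) ≤ L/T := by
      rw [div_le_div_iff₀ (by positivity) hT0]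
      nlinarith [mul_le_mul_of_nonneg_right hLL hT0.le,
        mul_le_mul_of_nonneg_right (mul_le_mul_of_nonneg_right hL1 hT0.le) hT0.le]
    have h2 : 0 ≤ L/T := by positivity
    linarith
  have hr3pos : 0 < r3 t := by linarith
  have hexpβ : Real.exp β ≤ 1 + β + (4/5)*β^2 :=
    aux_quad hβpos.le (hβub2.trans (by norm_num))
  have hβsq0 : β^2 ≤ (7/300)^2 := pow_le_pow_left₀ hβpos.le hβub2 2
  have hexpβub : Real.exp β ≤ 1.03 := by nlinarith [hexpβ, hβsq0, hβub2]
  have hβsq : β^2 ≤ 0.49/T^2 := by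
    have h := mul_le_mul hβub1 hβub1 hβpos.le (by positivity)
    calc β^2 = β*β := sq β
      _ ≤ (0.7/T)*(0.7/T) := h
      _ = 0.49/T^2 := by ring
  have hρub : ρ ≤ 0.00001/T^2 := by
    rw [le_div_iff₀ (by positivity)]
    linarith [hρle]
  have hstep : Real.exp β + 2*ρ*(Real.exp β * r3 t) ≤ r3 t := by
    have hLLd : (L - L^2)/(2*T^2) ≤ 0.1064/T^2 := by
      rw [div_le_div_iff₀ (by positivity) (by positivity)]
      nlinarith
    have h1 : β + (4/5)*β^2 ≤ L/T - 0.108/T^2 := by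
      have e2 : β = L/T - 0.5/T^2 := by rw [hβdef]; ring
      have h'' := mul_le_mul_of_nonneg_left hβsq (by norm_num : (0:ℝ) ≤ 4/5)
      have e3 : (4/5)*(0.49/T^2) = 0.392/T^2 := by ring
      have e4 : L/T - 0.5/T^2 + 0.392/T^2 = L/T - 0.108/T^2 := by ring
      linarith
    have h2 : 2*ρ*(Real.exp β * r3 t) ≤ 0.0001/T^2 := by
      have hm : Real.exp β * r3 t ≤ 1.03*1.024 :=
        mul_le_mul hexpβub hr3ub hr3pos.le (by norm_num)
      calc 2*ρ*(Real.exp β * r3 t) ≤ 2*ρ*(1.03*1.024) := by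
            apply mul_le_mul_of_nonneg_left hm (by positivity)
        _ ≤ 2*(0.00001/T^2)*(1.03*1.024) := by
            apply mul_le_mul_of_nonneg_right (by linarith) (by norm_num)
        _ = (2*0.00001*(1.03*1.024))/T^2 := by ring
        _ ≤ 0.0001/T^2 := by gcongr <;> norm_num
    have hr3lb' : 1 + L/T - 0.1064/T^2 ≤ r3 t := by
      rw [hr3val]; linarith [hLLd]
    have h3 : (0.0001:ℝ)/T^2 + (0.1064:ℝ)/T^2 ≤ 0.108/T^2 := by
      rw [← add_div]
      gcongr <;> norm_num
    linarith [hexpβ, h1, h2, hr3lb', h3]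
  have hr3key : Real.exp β * (1/(r3 t) + 2*ρ) ≤ 1 := by
    have h2 : Real.exp β * (1/(r3 t) + 2*ρ)
        = (Real.exp β + 2*ρ*(Real.exp β * r3 t))/ r3 t := by
      field_simp
    rw [h2, div_le_one hr3pos]
    exact hstep
  have hR'Rb : 1/(r3 t) + 2*ρ ≤ Rb := by
    rw [hRbdef, Real.exp_neg, ← one_div, le_div_iff₀ (Real.exp_pos β)]
    calc (1/(r3 t) + 2*ρ) * Real.exp β = Real.exp β * (1/(r3 t) + 2*ρ) := by ring
      _ ≤ 1 := hr3key
  have hden : 0.65/T ≤ 1 - Rb := by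
    have h1 : 1+β ≤ Real.exp β := by have := Real.add_one_le_exp β; linarith
    have h1b : (0:ℝ) < 1 + β := by linarith
    have h2 : Rb ≤ 1/(1+β) := by
      rw [hRbdef, Real.exp_neg, ← one_div]
      exact one_div_le_one_div_of_le h1b h1
    have h3 : 1/(1+β) ≤ 1 - β + β^2 := by
      rw [div_le_iff₀ h1b]
      nlinarith [hβpos]
    have h4 : β^2 ≤ 0.017/T := by
      have h := mul_le_mul hβub1 hβub2 hβpos.le (by positivity)
      calc β^2 = β*β := sq β
        _ ≤ (0.7/T)*(7/300) := h
        _ ≤ 0.017/T := by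
            rw [div_mul_eq_mul_div, div_le_div_iff₀ hT0 hT0]
            nlinarith
    have h5 : 0.676/T - 0.017/T ≤ β - β^2 := by linarith
    have h6 : (0.65:ℝ)/T ≤ 0.676/T - 0.017/T := by
      rw [div_sub_div_same, div_le_div_iff₀ hT0 hT0]
      nlinarith
    linarith
  have hTβ : 0.676 ≤ T*β := by
    have := mul_le_mul_of_nonneg_left hβlb hT0.le
    calc (0.676:ℝ) = T*(0.676/T) := by field_simp
      _ ≤ T*β := this
  have hf2bound : Real.exp (-(T*β)) ≤ 0.523 := by
    have h1 : Real.exp (-(T*β)) ≤ Real.exp (-(0.676:ℝ)) :=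
      Real.exp_le_exp.2 (by linarith)
    have h2 : (1.913:ℝ) ≤ Real.exp (0.676:ℝ) := by
      have := aux_exp8 (x := 0.676) (by norm_num)
      norm_num at this ⊢
      nlinarith [this]
    have h3 : Real.exp (-(0.676:ℝ)) ≤ 0.523 := by
      rw [Real.exp_neg, inv_le_comm₀ (Real.exp_pos _) (by norm_num)]
      linarith
    linarith
  have hT2β : 20 ≤ T^2*β := by
    calc (20:ℝ) ≤ 30*0.676 := by norm_num
      _ ≤ T*(T*β) := by
          apply mul_le_mul hT hTβ (by norm_num) hT0.le
      _ = T^2*β := by ring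
  have hexp2 : (2:ℝ) ≤ Real.exp 1 := by
    have := Real.add_one_le_exp (1:ℝ); linarith
  have h20 : Real.exp (-(T^2*β)) ≤ 1/1000000 := by
    have h1 : Real.exp (-(T^2*β)) ≤ Real.exp (-(20:ℝ)) :=
      Real.exp_le_exp.2 (by linarith)
    have h2 : (1000000:ℝ) ≤ Real.exp 20 := by
      calc (1000000:ℝ) ≤ 2^(20:ℕ) := by norm_num
        _ ≤ Real.exp 1 ^ (20:ℕ) := pow_le_pow_left₀ (by norm_num) hexp2 20
        _ = Real.exp 20 := by rw [← Real.exp_nat_mul]; norm_num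
    have h4 : Real.exp 20 ≤ Real.exp (T^2*β) := Real.exp_le_exp.2 hT2β
    rw [Real.exp_neg, inv_le_comm₀ (Real.exp_pos _) (by norm_num)]
    norm_num
    linarith
  -- S = brk 3 + brk 4
  set S : ℝ := ((brk t 3 + brk t 4 : ℕ) : ℝ) with hSdef
  have hS : S = T^3 + 2*T^2 + 2*T + 2 := by
    rw [hSdef, brk_three, brk_four]; push_cast; ring
  have hSβ : L*T^2 + 0.886*T ≤ S*β := by
    rw [hβeq, hS, mul_div_assoc', le_div_iff₀ (by positivity)]
    exact auxSb hT hL1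
  have h2L : Real.exp L = 2 := Real.exp_log (by norm_num)
  have h2pow : (2:ℝ)^(t^2) = Real.exp (T^2*L) := by
    rw [← h2L, ← Real.exp_nat_mul]; congr 1; push_cast; ring
  have hρexp : ρ = Real.exp (-(T*L)) := by
    rw [hρdef]
    have h12 : ((1:ℝ)/2) = Real.exp (-L) := by
      rw [Real.exp_neg, h2L]; norm_num
    rw [h12, ← Real.exp_nat_mul]; congr 1; push_cast; ring
  have hfinal : 3.7*T*Real.exp (-(S*β)) * 2^(t^2) ≤ ρ := by
    rw [h2pow, hρexp]
    have haux1 : 3.7*T ≤ Real.exp ((19/100)*T) := by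
      have := aux1 t ht; push_cast at this; linarith
    calc 3.7*T*Real.exp (-(S*β)) * Real.exp (T^2*L)
        = 3.7*T*Real.exp (T^2*L - S*β) := by
          rw [mul_assoc, ← Real.exp_add]; ring_nf
      _ ≤ 3.7*T*Real.exp (-(0.886*T)) := by
          apply mul_le_mul_of_nonneg_left (Real.exp_le_exp.2 (by linarith [hSβ]))
          positivity
      _ ≤ Real.exp ((19/100)*T) * Real.exp (-(0.886*T)) :=
          mul_le_mul_of_nonneg_right haux1 (Real.exp_pos _).le
      _ = Real.exp ((19/100)*T - 0.886*T) := by rw [← Real.exp_add]; ring_nf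
      _ ≤ Real.exp (-(T*L)) := by
          apply Real.exp_le_exp.2
          have := mul_le_mul_of_nonneg_left hL2 hT0.le
          linarith
  -- terms of the series
  set F : ℕ → ℂ → ℂ := fun k w => (-1:ℂ)^k * ∏ j ∈ Finset.Icc 1 k, ff t w j with hFdef
  have hFnorm : ∀ (k : ℕ) (w : ℂ), ‖F k w‖ = ∏ j ∈ Finset.Icc 1 k, ‖ff t w j‖ := by
    intro k w
    rw [hFdef]
    rw [norm_mul, norm_pow, norm_neg, norm_one, one_pow, one_mul, norm_prod]
  have hkey : ∀ (z : ℂ) (x : ℝ), ‖z‖ ≤ x → x < 1 → ‖z/(1-z)‖ ≤ x/(1-x) := by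
    intro z x h1 h2
    have h3 : 1 - x ≤ ‖1 - z‖ := by
      calc 1 - x ≤ 1 - ‖z‖ := by linarith
        _ = ‖(1:ℂ)‖ - ‖z‖ := by rw [norm_one]
        _ ≤ ‖1 - z‖ := norm_sub_norm_le 1 z
    rw [norm_div]
    exact div_le_div₀ ((norm_nonneg z).trans h1) h1 (by linarith) h3
  have hpow : ∀ (w : ℂ), ‖w‖ ≤ Rb → ∀ j, ‖w ^ brk t j‖ ≤ Real.exp (-((brk t j : ℝ)*β)) := by
    intro w hw j
    rw [norm_pow]
    calc ‖w‖^brk t j ≤ Rb^brk t j := pow_le_pow_left₀ (norm_nonneg w) hw _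
      _ = Real.exp (-((brk t j:ℝ)*β)) := by
          rw [hRbdef, ← Real.exp_nat_mul]; congr 1; ring
  have hf1 : ∀ w:ℂ, ‖w‖ ≤ Rb → ‖ff t w 1‖ ≤ 1.6*T := by
    intro w hw
    have hffval : ff t w 1 = w/(1-w) := by simp [ff, brk_one]
    have h := hkey w Rb hw hRb1
    rw [hffval]
    refine h.trans ?_
    rw [div_le_iff₀ (by linarith [hden] : (0:ℝ) < 1 - Rb)]
    have h2 := mul_le_mul_of_nonneg_left hden (by linarith : (0:ℝ) ≤ 1.6*T)
    have e : 1.6*T*(0.65/T) = 1.04 := by field_simp; ring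
    rw [e] at h2
    linarith [hRb1]
  have hf2 : ∀ w:ℂ, ‖w‖ ≤ Rb → ‖ff t w 2‖ ≤ 1.1 := by
    intro w hw
    have hb : ‖w ^ brk t 2‖ ≤ 0.523 := by
      refine (hpow w hw 2).trans ?_
      refine le_trans (Real.exp_le_exp.2 ?_) hf2bound
      have hc : (T:ℝ) ≤ ((brk t 2:ℕ):ℝ) := by rw [brk_two]; push_cast; linarith
      have := mul_le_mul_of_nonneg_right hc hβpos.le
      linarith
    have h := hkey (w ^ brk t 2) 0.523 hb (by norm_num)
    calc ‖ff t w 2‖ = ‖w^brk t 2/(1 - w^brk t 2)‖ := rfl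
      _ ≤ 0.523/(1-0.523) := h
      _ ≤ 1.1 := by norm_num
  have hT2brk : ∀ j, 3 ≤ j → (T^2:ℝ) ≤ ((brk t j:ℕ):ℝ) := by
    intro j hj
    have h1 : t^2 ≤ brk t 3 := by rw [brk_three]; omega
    have h2 : brk t 3 ≤ brk t j := brk_le_brk t 3 j hj
    have : (t^2:ℕ) ≤ brk t j := le_trans h1 h2
    calc (T^2:ℝ) = ((t^2:ℕ):ℝ) := by push_cast; ring
      _ ≤ ((brk t j:ℕ):ℝ) := by exact_mod_cast this
  have hsmallpow : ∀ j, 3 ≤ j → Real.exp (-((brk t j:ℝ)*β)) ≤ 1/1000000 := by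
    intro j hj
    refine le_trans (Real.exp_le_exp.2 ?_) h20
    have := mul_le_mul_of_nonneg_right (hT2brk j hj) hβpos.le
    linarith
  have hfj' : ∀ w:ℂ, ‖w‖ ≤ Rb → ∀ j, 3 ≤ j →
      ‖ff t w j‖ ≤ 1.01 * Real.exp (-((brk t j:ℝ)*β)) := by
    intro w hw j hj
    have hx1 : Real.exp (-((brk t j:ℝ)*β)) ≤ 1/1000000 := hsmallpow j hj
    have hxpos : 0 < Real.exp (-((brk t j:ℝ)*β)) := Real.exp_pos _
    have h := hkey (w ^ brk t j) _ (hpow w hw j) (by linarith)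
    calc ‖ff t w j‖ = ‖w^brk t j/(1 - w^brk t j)‖ := rfl
      _ ≤ Real.exp (-((brk t j:ℝ)*β))/(1 - Real.exp (-((brk t j:ℝ)*β))) := h
      _ ≤ 1.01 * Real.exp (-((brk t j:ℝ)*β)) := auxSmallDiv hxpos hx1
  have hfj : ∀ w:ℂ, ‖w‖ ≤ Rb → ∀ j, 3 ≤ j → ‖ff t w j‖ ≤ 1/2 := by
    intro w hw j hj
    refine (hfj' w hw j hj).trans ?_
    have h1 := hsmallpow j hj
    have h2 := (Real.exp_pos (-((brk t j:ℝ)*β))).le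
    linarith
  -- product bounds
  have hprod2 : ∀ w:ℂ, ‖w‖ ≤ Rb → ∀ k, 2 ≤ k →
      (∏ j ∈ Finset.Icc 1 k, ‖ff t w j‖) ≤ (1.6*T)*1.1*((1:ℝ)/2)^(k-2) := by
    intro w hw k hk
    induction k, hk using Nat.le_induction with
    | base =>
      have hset : Finset.Icc (1:ℕ) 2 = {1, 2} := by decide
      rw [hset, Finset.prod_insert (by decide), Finset.prod_singleton]
      have h := mul_le_mul (hf1 w hw) (hf2 w hw) (norm_nonneg _) (by positivity)
      simpa using h
    | succ k hk ih =>
      rw [Finset.prod_Icc_succ_top (by omega : 1 ≤ k+1)]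
      have hb := hfj w hw (k+1) (by omega)
      have hstep2 : (k+1)-2 = (k-2)+1 := by omega
      rw [hstep2, pow_succ]
      have h := mul_le_mul ih hb (norm_nonneg _) (by positivity)
      exact h.trans (le_of_eq (by ring))
  have hprodall : ∀ w:ℂ, ‖w‖ ≤ Rb → ∀ k,
      (∏ j ∈ Finset.Icc 1 k, ‖ff t w j‖) ≤ 8*T*((1:ℝ)/2)^k := by
    intro w hw k
    match k with
    | 0 =>
      rw [show Finset.Icc (1:ℕ) 0 = ∅ from by decide, Finset.prod_empty, pow_zero, mul_one]
      linarith only [hT]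
    | 1 =>
      rw [show Finset.Icc (1:ℕ) 1 = {1} from by decide, Finset.prod_singleton, pow_one]
      have := hf1 w hw
      linarith only [this, hT]
    | (k+2) =>
      refine (hprod2 w hw (k+2) (by omega)).trans ?_
      have hstep3 : (k+2)-2 = k := by omega
      rw [hstep3]
      have e : (8:ℝ)*T*((1:ℝ)/2)^(k+2) = 2*T*((1:ℝ)/2)^k := by
        rw [pow_succ, pow_succ]; ring
      rw [e]
      have hpnn : (0:ℝ) ≤ ((1:ℝ)/2)^k := by positivity
      have hc : (1.6*T)*1.1 ≤ 2*T := by linarith only [hT]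
      exact mul_le_mul_of_nonneg_right hc hpnn
  have eadd : Real.exp (-((brk t 3:ℝ)*β)) * Real.exp (-((brk t 4:ℝ)*β))
      = Real.exp (-(S*β)) := by
    rw [← Real.exp_add]
    congr 1
    rw [hSdef]
    push_cast
    ring
  have hprod4 : ∀ w:ℂ, ‖w‖ ≤ Rb → ∀ i:ℕ,
      (∏ j ∈ Finset.Icc 1 (i+4), ‖ff t w j‖)
        ≤ 1.6*T*1.1*(1.0201*Real.exp (-(S*β)))*((1:ℝ)/2)^i := by
    intro w hw i
    induction i with
    | zero =>
      have hset : Finset.Icc (1:ℕ) 4 = {1,2,3,4} := by decide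
      rw [show 0+4 = 4 from rfl, hset, Finset.prod_insert (by decide),
        Finset.prod_insert (by decide), Finset.prod_insert (by decide),
        Finset.prod_singleton]
      have h3 := hfj' w hw 3 (by norm_num)
      have h4 := hfj' w hw 4 (by norm_num)
      have h34 : ‖ff t w 3‖*‖ff t w 4‖ ≤ 1.0201*Real.exp (-(S*β)) := by
        have h := mul_le_mul h3 h4 (norm_nonneg _) (by positivity)
        rw [show (1.01:ℝ) * Real.exp (-((brk t 3:ℝ)*β)) * (1.01 * Real.exp (-((brk t 4:ℝ)*β)))
            = 1.0201*(Real.exp (-((brk t 3:ℝ)*β)) * Real.exp (-((brk t 4:ℝ)*β))) from by ring,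
          eadd] at h
        exact h
      have hA : ‖ff t w 2‖*(‖ff t w 3‖*‖ff t w 4‖) ≤ 1.1*(1.0201*Real.exp (-(S*β))) :=
        mul_le_mul (hf2 w hw) h34 (by positivity) (by norm_num)
      have hB : ‖ff t w 1‖*(‖ff t w 2‖*(‖ff t w 3‖*‖ff t w 4‖))
          ≤ 1.6*T*(1.1*(1.0201*Real.exp (-(S*β)))) :=
        mul_le_mul (hf1 w hw) hA (by positivity) (by positivity)
      rw [pow_zero, mul_one]
      exact hB.trans (le_of_eq (by ring))
    | succ i ih =>
      rw [show i+1+4 = (i+4)+1 from by omega, Finset.prod_Icc_succ_top (by omega : 1 ≤ i+4+1)]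
      have hb := hfj w hw (i+4+1) (by omega)
      have h := mul_le_mul ih hb (norm_nonneg _) (by positivity)
      refine h.trans (le_of_eq ?_)
      rw [pow_succ]
      ring
  -- summability and tail bound
  have hsummable : ∀ w:ℂ, ‖w‖ ≤ Rb → Summable (fun k => F k w) := by
    intro w hw
    apply Summable.of_norm_bounded (g := fun k => 8*T*((1:ℝ)/2)^k)
      (summable_geometric_two.mul_left (8*T))
    intro k
    rw [hFnorm]
    exact hprodall w hw k
  have htail : ∀ w:ℂ, ‖w‖ ≤ Rb →
      ‖Dfun t w - D4 t w‖ ≤ 3.7*T*Real.exp (-(S*β)) := by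
    intro w hw
    have hsum := hsummable w hw
    have heq : Dfun t w - D4 t w = ∑' i, F (i+4) w := by
      have h := hsum.sum_add_tsum_nat_add 4
      have hD : Dfun t w = ∑' k, F k w := rfl
      have hD4 : D4 t w = ∑ k ∈ Finset.range 4, F k w := rfl
      rw [hD, hD4, ← h, add_sub_cancel_left]
    rw [heq]
    have hbound : ∀ i, ‖F (i+4) w‖ ≤ 1.6*T*1.1*(1.0201*Real.exp (-(S*β)))*((1:ℝ)/2)^i :=
      fun i => by rw [hFnorm]; exact hprod4 w hw i
    have hgs : Summable (fun i : ℕ => 1.6*T*1.1*(1.0201*Real.exp (-(S*β)))*((1:ℝ)/2)^i) :=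
      summable_geometric_two.mul_left _
    have hsn : Summable (fun i => ‖F (i+4) w‖) :=
      Summable.of_nonneg_of_le (fun i => norm_nonneg _) hbound hgs
    calc ‖∑' i, F (i+4) w‖ ≤ ∑' i, ‖F (i+4) w‖ := norm_tsum_le_tsum_norm hsn
      _ ≤ ∑' i, 1.6*T*1.1*(1.0201*Real.exp (-(S*β)))*((1:ℝ)/2)^i :=
          Summable.tsum_le_tsum hbound hsn hgs
      _ = 1.6*T*1.1*(1.0201*Real.exp (-(S*β)))*2 := by
          rw [tsum_mul_left, tsum_geometric_two]
      _ ≤ 3.7*T*Real.exp (-(S*β)) := by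
          have h1 : 0 ≤ T*Real.exp (-(S*β)) := by positivity
          nlinarith only [h1]
  -- the open set U
  set R' : ℝ := 1/(r3 t) + 2*ρ with hR'def
  have hR'pos : 0 < R' := by
    have h1 : 0 < 1/(r3 t) := one_div_pos.2 hr3pos
    rw [hR'def]; linarith only [h1, hρpos]
  set U : Set ℂ := Metric.ball (0:ℂ) R' with hUdef
  have hUopen : IsOpen U := Metric.isOpen_ball
  have hUw : ∀ w ∈ U, ‖w‖ ≤ Rb := by
    intro w hwU
    have h := Metric.mem_ball.1 hwU
    rw [dist_zero_right] at h
    linarith only [h, hR'Rb]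
  have hwlt1 : ∀ w ∈ U, ‖w‖ < 1 := fun w hw => lt_of_le_of_lt (hUw w hw) hRb1
  have hffdiff : ∀ j, 1 ≤ j → ∀ w ∈ U, DifferentiableAt ℂ (fun z => ff t z j) w := by
    intro j hj w hw
    have hne : (1:ℂ) - w ^ brk t j ≠ 0 := by
      intro hcontra
      have h1 : w ^ brk t j = 1 := by linear_combination -hcontra
      have h2 : ‖w ^ brk t j‖ < 1 := by
        rw [norm_pow]
        calc ‖w‖^brk t j ≤ ‖w‖^1 :=
              pow_le_pow_of_le_one (norm_nonneg w) (le_of_lt (hwlt1 w hw))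
                (one_le_brk t j hj (by omega))
          _ < 1 := by rw [pow_one]; exact hwlt1 w hw
      rw [h1, norm_one] at h2
      exact lt_irrefl 1 h2
    have h1 : DifferentiableAt ℂ (fun z : ℂ => z ^ brk t j) w := differentiableAt_pow _
    simp only [ff]
    exact DifferentiableAt.div h1 ((differentiableAt_const 1).sub h1) hne
  have hFdiff : ∀ k, DifferentiableOn ℂ (fun w => F k w) U := by
    intro k w hw
    apply DifferentiableAt.differentiableWithinAt
    apply DifferentiableAt.const_mul
    apply DifferentiableAt.fun_finsetProd
    intro j hj
    exact hffdiff j (Finset.mem_Icc.1 hj).1 w hw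
  have hpartial : ∀ n : ℕ, DifferentiableOn ℂ (fun w => ∑ k ∈ Finset.range n, F k w) U :=
    fun n => DifferentiableOn.fun_sum (fun k _ => hFdiff k)
  have htuo : TendstoUniformlyOn (fun N w => ∑ k ∈ Finset.range N, F k w)
      (fun w => ∑' k, F k w) Filter.atTop U := by
    apply tendstoUniformlyOn_tsum_nat (summable_geometric_two.mul_left (8*T))
    intro k w hw
    rw [hFnorm]
    exact hprodall w (hUw w hw) k
  have hDdiff : DifferentiableOn ℂ (Dfun t) U := by
    have h := htuo.tendstoLocallyUniformlyOn.differentiableOn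
      (Filter.Eventually.of_forall hpartial) hUopen
    have he : (fun w => ∑' k, F k w) = Dfun t := rfl
    rwa [he] at h
  have hD4diff : DifferentiableOn ℂ (D4 t) U := by
    have he : (fun w => ∑ k ∈ Finset.range 4, F k w) = D4 t := rfl
    rw [← he]
    exact hpartial 4
  have hqU : q ∈ U := by
    rw [hUdef, Metric.mem_ball, dist_zero_right, hR'def]
    linarith only [hq2, hρpos]
  have hball : Metric.closedBall q ρ ⊆ U := by
    intro z hz
    rw [Metric.mem_closedBall] at hz
    rw [hUdef, Metric.mem_ball]
    calc dist z 0 ≤ dist z q + dist q 0 := dist_triangle z q 0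
      _ ≤ ρ + ‖q‖ := by rw [dist_zero_right]; linarith only [hz]
      _ < R' := by rw [hR'def]; linarith only [hq2, hρpos]
  have hgdiff : DifferentiableOn ℂ (fun w => Dfun t w - D4 t w) U := hDdiff.sub hD4diff
  have hdc : DiffContOnCl ℂ (fun w => Dfun t w - D4 t w) (Metric.ball q ρ) :=
    hgdiff.diffContOnCl_ball hball
  have hsphere : ∀ z ∈ Metric.sphere q ρ, ‖Dfun t z - D4 t z‖ ≤ 3.7*T*Real.exp (-(S*β)) := by
    intro z hz
    exact htail z (hUw z (hball (Metric.sphere_subset_closedBall hz)))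
  have hcauchy := Complex.norm_deriv_le_of_forall_mem_sphere_norm_le hρpos hdc hsphere
  have hDq : DifferentiableAt ℂ (Dfun t) q := hDdiff.differentiableAt (hUopen.mem_nhds hqU)
  have hD4q : DifferentiableAt ℂ (D4 t) q := hD4diff.differentiableAt (hUopen.mem_nhds hqU)
  have hderiv : deriv (fun w => Dfun t w - D4 t w) q = deriv (Dfun t) q - deriv (D4 t) q :=
    deriv_sub hDq hD4q
  rw [← hderiv]
  refine hcauchy.trans ?_
  rw [div_le_div_iff₀ hρpos (by positivity), one_mul]
  exact hfinal
end
end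

section
/- Let t ≥ 2 and n ≥ 0 be integers. Then f_t(1 + n(t−1)) = c_n; that is, the number of nondecreasing (1+n(t−1))-tuples of nonnegative integers 0 ≤ x_1 ≤ ⋯ ≤ x_{1+n(t−1)} with Σ_i 1/t^{x_i} = 1 equals the number of finite sequences (b_1, …, b_l) of positive integers (l ≥ 0) with b_1 = 1, b_i ≤ t·b_{i−1} for 2 ≤ i ≤ l, and b_1 + ⋯ + b_l = n. -/
noncomputable section

namespace Stmt14Aux


/-- Sum of a list via getD. -/
lemma sum_range_map {M : Type*} [AddCommMonoid M] (g : ℕ → M) (m : ℕ) :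
    ((List.range m).map g).sum = ∑ i ∈ Finset.range m, g i := by
  induction m with
  | zero => simp
  | succ m ih =>
    rw [List.range_succ, Finset.sum_range_succ, List.map_append, List.sum_append, ih]; simp

lemma count_ofFn {r : ℕ} (x : Fin r → ℕ) (d : ℕ) :
    (Finset.univ.filter fun i => x i = d).card = (List.ofFn x).count d := by
  rw [List.ofFn_eq_map, List.count_eq_countP, List.countP_map,
    List.countP_eq_length_filter, Fin.univ_def]
  simp only [Finset.card_def, Finset.filter_val, Multiset.filter_coe, Multiset.coe_card]
  congr 1

lemma sum_getD (l : List ℕ) : l.sum = ∑ d ∈ Finset.range l.length, l.getD d 0 := by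
  induction l with
  | nil => simp
  | cons a tl ih =>
    rw [List.sum_cons, List.length_cons, Finset.sum_range_succ']
    simp only [List.getD_cons_succ, List.getD_cons_zero]
    rw [← ih]; exact Nat.add_comm _ _

lemma ofFn_getD {r : ℕ} (L : List ℕ) (h : L.length = r) :
    List.ofFn (fun i : Fin r => L.getD i 0) = L := by
  apply List.ext_getElem (by simp [h])
  intro i h1 h2
  rw [List.getElem_ofFn]
  exact List.getD_eq_getElem _ _ h2

lemma sorted_bindrep (a : ℕ → ℕ) (m : ℕ) :
    List.Pairwise (· ≤ ·) ((List.range m).flatMap fun d => List.replicate (a d) d) := by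
  induction m with
  | zero => simp
  | succ m ih =>
    rw [List.range_succ, List.flatMap_append]
    refine (List.pairwise_append).2 ⟨ih, ?_, ?_⟩
    · simp only [List.flatMap_cons, List.flatMap_nil, List.append_nil]
      exact List.pairwise_replicate.2 (Or.inr le_rfl)
    · intro u hu v hv
      obtain ⟨d, hd, hu⟩ := List.mem_flatMap.1 hu
      simp only [List.flatMap_cons, List.flatMap_nil, List.append_nil] at hv
      rw [List.eq_of_mem_replicate hu, List.eq_of_mem_replicate hv]
      exact (List.mem_range.1 hd).le

lemma mem_bindrep {a : ℕ → ℕ} {m v : ℕ}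
    (h : v ∈ (List.range m).flatMap fun d => List.replicate (a d) d) : v < m := by
  obtain ⟨d, hd, h⟩ := List.mem_flatMap.1 h
  rw [List.eq_of_mem_replicate h]; exact List.mem_range.1 hd

lemma count_bindrep (a : ℕ → ℕ) (m v : ℕ) :
    ((List.range m).flatMap fun d => List.replicate (a d) d).count v
      = if v < m then a v else 0 := by
  rw [List.count_flatMap]
  have h1 : List.map (List.count v ∘ fun d => List.replicate (a d) d) (List.range m)
      = (List.range m).map (fun d => if d = v then a d else 0) := by
    apply List.map_congr_left
    intro d _
    simp [Function.comp, List.count_replicate]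
  rw [h1, sum_range_map, Finset.sum_ite_eq' (Finset.range m) v a]
  simp [Finset.mem_range]

lemma length_bindrep (a : ℕ → ℕ) (m : ℕ) :
    ((List.range m).flatMap fun d => List.replicate (a d) d).length
      = ∑ d ∈ Finset.range m, a d := by
  rw [List.length_flatMap]
  have h1 : List.map (fun d => (List.replicate (a d) d).length) (List.range m)
      = (List.range m).map a := by simp [Function.comp]
  rw [h1, sum_range_map]

lemma sum_af_N {t : ℕ} (ht : 1 ≤ t) (a b : ℕ → ℕ) (h0 : a 0 + b 0 = 1)
    (hrec : ∀ d, a (d+1) + b (d+1) = t * b d) (D : ℕ) :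
    (∑ d ∈ Finset.range (D+1), a d) + b D
      = 1 + (t-1) * ∑ d ∈ Finset.range D, b d := by
  induction D with
  | zero => simpa using h0
  | succ D ih =>
    rw [Finset.sum_range_succ, Finset.sum_range_succ (f := b), mul_add]
    have h1 := hrec D
    have e : t * b D = b D + (t-1) * b D := by
      obtain ⟨s, rfl⟩ : ∃ s, t = s + 1 := ⟨t - 1, by omega⟩
      simp only [Nat.add_sub_cancel]; ring
    rw [e] at h1
    generalize (t-1) * (∑ d ∈ Finset.range D, b d) = u at *
    generalize (t-1) * b D = v at *
    omega

lemma sum_af_Q {t : ℕ} (ht : 2 ≤ t) (a b : ℕ → ℕ) (h0 : a 0 + b 0 = 1)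
    (hrec : ∀ d, a (d+1) + b (d+1) = t * b d) (D : ℕ) :
    (∑ d ∈ Finset.range (D+1), (a d : ℚ)/(t:ℚ)^d) + (b D : ℚ)/(t:ℚ)^D = 1 := by
  have ht0 : (t:ℚ) ≠ 0 := Nat.cast_ne_zero.2 (by omega)
  induction D with
  | zero =>
    simp only [zero_add, Finset.sum_range_one, pow_zero, div_one]
    exact_mod_cast h0
  | succ D ih =>
    rw [Finset.sum_range_succ]
    have h1 : (a (D+1) : ℚ) + b (D+1) = t * b D := by exact_mod_cast hrec D
    have key : (a (D+1):ℚ)/t^(D+1) + (b (D+1):ℚ)/t^(D+1) = (b D:ℚ)/t^D := by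
      rw [← add_div, h1, pow_succ, mul_comm ((t:ℚ)^D) t, mul_div_mul_left _ _ ht0]
    linarith [ih, key]

lemma fiber_sum' {r m : ℕ} (x : Fin r → ℕ) (s : Finset (Fin r))
    (hx : ∀ i ∈ s, x i < m) (f : ℕ → ℚ) :
    ∑ i ∈ s, f (x i)
      = ∑ d ∈ Finset.range m, ((s.filter fun i => x i = d).card : ℚ) * f d := by
  rw [← Finset.sum_fiberwise_of_maps_to (fun i hi => Finset.mem_range.2 (hx i hi))
    (fun i => f (x i))]
  refine Finset.sum_congr rfl fun d _ => ?_
  have h1 : ∀ i ∈ s.filter (fun i => x i = d), f (x i) = f d :=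
    fun i hi => by rw [(Finset.mem_filter.1 hi).2]
  rw [Finset.sum_congr rfl h1, Finset.sum_const, nsmul_eq_mul]

lemma fiber_card {r m : ℕ} (x : Fin r → ℕ) (hx : ∀ i, x i < m) :
    r = ∑ d ∈ Finset.range m, (Finset.univ.filter fun i => x i = d).card := by
  have := Finset.card_eq_sum_card_fiberwise (f := x) (s := Finset.univ)
    (t := Finset.range m) (fun i _ => Finset.mem_range.2 (hx i))
  simpa using this

/-- leaf counts of the canonical tree of a bounded degree sequence -/
def af (t : ℕ) (l : List ℕ) : ℕ → ℕ
  | 0 => 1 - l.getD 0 0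
  | d+1 => t * l.getD d 0 - l.getD (d+1) 0

/-- the sorted list of leaf depths -/
def LL (t : ℕ) (l : List ℕ) : List ℕ :=
  (List.range (l.length + 1)).flatMap fun d => List.replicate (af t l d) d

/-- the monotone tuple associated to a bounded degree sequence -/
def FF (t n : ℕ) (l : List ℕ) : Fin (1 + n * (t-1)) → ℕ :=
  fun i => (LL t l).getD i 0

lemma getD_zero_le {t : ℕ} {l : List ℕ} (hb : IsBSeq t l) : l.getD 0 0 ≤ 1 := by
  cases l with
  | nil => simp
  | cons a tl =>
    have := hb.2.1 (List.cons_ne_nil a tl)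
    simp [List.headI] at this
    simp [this]

lemma getD_succ_le {t : ℕ} {l : List ℕ} (hb : IsBSeq t l) (d : ℕ) :
    l.getD (d+1) 0 ≤ t * l.getD d 0 := by
  by_cases h : d + 1 < l.length
  · have h2 := hb.2.2 d h
    rw [List.getD_eq_getElem _ _ h, List.getD_eq_getElem _ _ (Nat.lt_of_succ_lt h)]
    simpa [List.get_eq_getElem] using h2
  · rw [List.getD_eq_default _ _ (Nat.not_lt.1 h)]
    exact Nat.zero_le _

lemma getD_pos {t : ℕ} {l : List ℕ} (hb : IsBSeq t l) {d : ℕ} (hd : d < l.length) :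
    0 < l.getD d 0 := by
  rw [List.getD_eq_getElem _ _ hd]
  exact hb.1 _ (List.getElem_mem hd)

lemma af_zero_add {t : ℕ} {l : List ℕ} (hb : IsBSeq t l) :
    af t l 0 + l.getD 0 0 = 1 := by
  have := getD_zero_le hb
  simp only [af]
  omega

lemma af_succ_add {t : ℕ} {l : List ℕ} (hb : IsBSeq t l) (d : ℕ) :
    af t l (d+1) + l.getD (d+1) 0 = t * l.getD d 0 := by
  have h := getD_succ_le hb d
  simp only [af]
  generalize t * l.getD d 0 = z at *
  omega

lemma count_LL (t : ℕ) (l : List ℕ) (v : ℕ) : (LL t l).count v = af t l v := by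
  rw [LL, count_bindrep]
  split_ifs with h
  · rfl
  · push_neg at h
    obtain ⟨e, rfl⟩ : ∃ e, v = e + 1 := ⟨v - 1, by omega⟩
    have h1 : l.getD e 0 = 0 := List.getD_eq_default _ _ (by omega)
    have h2 : l.getD (e+1) 0 = 0 := List.getD_eq_default _ _ (by omega)
    simp only [af]
    rw [h1, h2]
    simp

lemma length_LL {t n : ℕ} (ht : 2 ≤ t) {l : List ℕ} (hb : IsBSeq t l) (hs : l.sum = n) :
    (LL t l).length = 1 + n * (t-1) := by
  rw [LL, length_bindrep]
  have hlast : l.getD l.length 0 = 0 := List.getD_eq_default _ _ le_rfl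
  have h := sum_af_N (t := t) (by omega) (af t l) (fun d => l.getD d 0)
    (af_zero_add hb) (af_succ_add hb) l.length
  rw [hlast, ← sum_getD, hs, Nat.add_zero] at h
  rw [h, Nat.mul_comm]

/-- Direction A: the tuple of a good list is in the tuple set. -/
lemma FF_mem {t n : ℕ} (ht : 2 ≤ t) {l : List ℕ} (hb : IsBSeq t l) (hs : l.sum = n) :
    Monotone (FF t n l) ∧ ∑ i, (1:ℚ)/(t:ℚ)^(FF t n l i) = 1 := by
  have hlen : (LL t l).length = 1 + n * (t-1) := length_LL ht hb hs
  have hsorted := sorted_bindrep (af t l) (l.length + 1)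
  have hget : ∀ i : Fin (1 + n * (t-1)), (i : ℕ) < (LL t l).length := by
    intro i; rw [hlen]; exact i.isLt
  constructor
  · intro i j hij
    rcases lt_or_eq_of_le hij with h | h
    · unfold FF
      rw [List.getD_eq_getElem _ _ (hget i), List.getD_eq_getElem _ _ (hget j)]
      exact (List.pairwise_iff_getElem.1 hsorted) _ _ (hget i) (hget j) h
    · rw [h]
  · have hofn : List.ofFn (FF t n l) = LL t l := ofFn_getD _ hlen
    have hx : ∀ i, FF t n l i < l.length + 1 := by
      intro i
      apply mem_bindrep (a := af t l) (m := l.length + 1)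
      show FF t n l i ∈ LL t l
      unfold FF
      rw [List.getD_eq_getElem _ _ (hget i)]
      exact List.getElem_mem _
    rw [fiber_sum' (FF t n l) Finset.univ (fun i _ => hx i) (fun d => (1:ℚ)/(t:ℚ)^d)]
    have hc : ∀ d, ((Finset.univ.filter fun i => FF t n l i = d).card : ℕ) = af t l d := by
      intro d
      rw [count_ofFn, hofn, count_LL]
    have := sum_af_Q ht (af t l) (fun d => l.getD d 0) (af_zero_add hb) (af_succ_add hb)
      l.length
    rw [List.getD_eq_default _ _ le_rfl] at this
    simp only [Nat.cast_zero, zero_div, add_zero] at this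
    calc ∑ d ∈ Finset.range (l.length + 1),
          ((Finset.univ.filter fun i => FF t n l i = d).card : ℚ) * ((1:ℚ)/(t:ℚ)^d)
        = ∑ d ∈ Finset.range (l.length + 1), (af t l d : ℚ)/(t:ℚ)^d := by
          refine Finset.sum_congr rfl fun d _ => ?_
          rw [hc d, mul_one_div]
      _ = 1 := this


/-- Direction B: injectivity. -/
lemma FF_inj {t n : ℕ} (ht : 2 ≤ t) :
    Set.InjOn (FF t n) {l : List ℕ | IsBSeq t l ∧ l.sum = n} := by
  intro l hl l' hl' h
  have hlen : (LL t l).length = 1 + n * (t-1) := length_LL ht hl.1 hl.2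
  have hlen' : (LL t l').length = 1 + n * (t-1) := length_LL ht hl'.1 hl'.2
  have hLL : LL t l = LL t l' := by
    rw [← ofFn_getD (LL t l) hlen, ← ofFn_getD (LL t l') hlen']
    exact congrArg List.ofFn h
  have haf : ∀ d, af t l d = af t l' d := by
    intro d
    rw [← count_LL t l d, hLL, count_LL]
  have hgetD : ∀ d, l.getD d 0 = l'.getD d 0 := by
    intro d
    induction d with
    | zero =>
      have e1 := af_zero_add hl.1
      have e2 := af_zero_add hl'.1
      have e3 := haf 0
      omega
    | succ d ih =>
      have e1 := af_succ_add hl.1 d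
      have e2 := af_succ_add hl'.1 d
      rw [ih] at e1
      have e3 := haf (d+1)
      generalize t * l'.getD d 0 = z at e1 e2
      omega
  have key : ∀ (a b : List ℕ), IsBSeq t a → IsBSeq t b →
      (∀ d, a.getD d 0 = b.getD d 0) → a.length ≤ b.length := by
    intro a b ha hb hab
    by_contra hc
    push_neg at hc
    have h1 : 0 < a.getD b.length 0 := getD_pos ha hc
    have h2 : b.getD b.length 0 = 0 := List.getD_eq_default _ _ le_rfl
    rw [hab] at h1
    omega
  have hlength : l.length = l'.length :=
    le_antisymm (key l l' hl.1 hl'.1 hgetD) (key l' l hl'.1 hl.1 fun d => (hgetD d).symm)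
  apply List.ext_getElem hlength
  intro i h1 h2
  rw [← List.getD_eq_getElem l 0 h1, ← List.getD_eq_getElem l' 0 h2]
  exact hgetD i


def cnt {r : ℕ} (x : Fin r → ℕ) (d : ℕ) : ℕ :=
  (Finset.univ.filter fun i => x i = d).card

def Bx (t : ℕ) {r : ℕ} (x : Fin r → ℕ) (D : ℕ) : ℕ :=
  t^D - ∑ d ∈ Finset.range (D+1), cnt x d * t^(D-d)

/-- Direction C: surjectivity. -/
lemma FF_surj {t n : ℕ} (ht : 2 ≤ t) (x : Fin (1 + n * (t-1)) → ℕ)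
    (hmono : Monotone x) (hsum : ∑ i, (1:ℚ)/(t:ℚ)^(x i) = 1) :
    ∃ l : List ℕ, (IsBSeq t l ∧ l.sum = n) ∧ FF t n l = x := by
  have ht0 : (t:ℚ) ≠ 0 := Nat.cast_ne_zero.2 (by omega)
  -- partial sums in ℚ
  have hq : ∀ D, ∑ i ∈ Finset.univ.filter (fun i => x i ≤ D), (1:ℚ)/(t:ℚ)^(x i)
      = ∑ d ∈ Finset.range (D+1), (cnt x d:ℚ)/(t:ℚ)^d := by
    intro D
    rw [fiber_sum' x (Finset.univ.filter (fun i => x i ≤ D))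
      (fun i hi => Nat.lt_succ_of_le (Finset.mem_filter.1 hi).2) (fun d => (1:ℚ)/(t:ℚ)^d)]
    refine Finset.sum_congr rfl fun d hd => ?_
    have hdD : d ≤ D := by have := Finset.mem_range.1 hd; omega
    have hfil : (Finset.univ.filter (fun i => x i ≤ D)).filter (fun i => x i = d)
        = Finset.univ.filter fun i => x i = d := by
      ext i
      simp only [Finset.mem_filter, Finset.mem_univ, true_and]
      exact ⟨fun h => h.2, fun h => ⟨h ▸ hdD, h⟩⟩
    rw [hfil, mul_one_div]
    rfl
  have hqle : ∀ D, ∑ d ∈ Finset.range (D+1), (cnt x d:ℚ)/(t:ℚ)^d ≤ 1 := by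
    intro D
    rw [← hq]
    calc ∑ i ∈ Finset.univ.filter (fun i => x i ≤ D), (1:ℚ)/(t:ℚ)^(x i)
        ≤ ∑ i, (1:ℚ)/(t:ℚ)^(x i) :=
          Finset.sum_le_sum_of_subset_of_nonneg (Finset.filter_subset _ _)
            (fun i _ _ => by positivity)
      _ = 1 := hsum
  have hcasts : ∀ D, ((∑ d ∈ Finset.range (D+1), cnt x d * t^(D-d) : ℕ):ℚ)
      = (t:ℚ)^D * ∑ d ∈ Finset.range (D+1), (cnt x d:ℚ)/(t:ℚ)^d := by
    intro D
    push_cast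
    rw [Finset.mul_sum]
    refine Finset.sum_congr rfl fun d hd => ?_
    have hdD : d ≤ D := by have := Finset.mem_range.1 hd; omega
    have h2 : (t:ℚ)^(D-d) = (t:ℚ)^D / (t:ℚ)^d := by
      rw [eq_div_iff (pow_ne_zero _ ht0), ← pow_add, Nat.sub_add_cancel hdD]
    rw [h2]; ring
  have hsum_le : ∀ D, ∑ d ∈ Finset.range (D+1), cnt x d * t^(D-d) ≤ t^D := by
    intro D
    rw [← Nat.cast_le (α := ℚ), hcasts]
    push_cast
    calc (t:ℚ)^D * ∑ d ∈ Finset.range (D+1), (cnt x d:ℚ)/(t:ℚ)^d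
        ≤ (t:ℚ)^D * 1 := by
          refine mul_le_mul_of_nonneg_left (hqle D) (by positivity)
      _ = (t:ℚ)^D := mul_one _
  have hcast : ∀ D, (Bx t x D : ℚ)
      = (t:ℚ)^D * (1 - ∑ d ∈ Finset.range (D+1), (cnt x d:ℚ)/(t:ℚ)^d) := by
    intro D
    rw [Bx, Nat.cast_sub (hsum_le D), hcasts]
    push_cast
    ring
  have hrecB : ∀ D, cnt x (D+1) + Bx t x (D+1) = t * Bx t x D := by
    intro D
    have key : ((cnt x (D+1) + Bx t x (D+1) : ℕ) : ℚ) = ((t * Bx t x D : ℕ) : ℚ) := by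
      push_cast [hcast]
      rw [Finset.sum_range_succ (fun d => (cnt x d:ℚ)/(t:ℚ)^d) (D+1)]
      field_simp
      ring
    exact_mod_cast key
  have h0B : cnt x 0 + Bx t x 0 = 1 := by
    have key : ((cnt x 0 + Bx t x 0 : ℕ) : ℚ) = 1 := by
      push_cast [hcast]
      rw [Finset.sum_range_one]
      field_simp
      ring
    exact_mod_cast key
  -- the zero level
  have hMzero : ∃ D, Bx t x D = 0 := by
    refine ⟨Finset.univ.sup x, ?_⟩
    have hfil : Finset.univ.filter (fun i => x i ≤ Finset.univ.sup x) = Finset.univ :=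
      Finset.filter_true_of_mem fun i _ => Finset.le_sup (Finset.mem_univ i)
    have key : (Bx t x (Finset.univ.sup x) : ℚ) = 0 := by
      rw [hcast, ← hq, hfil, hsum]
      ring
    exact_mod_cast key
  set L := Nat.find hMzero with hLdef
  have hLzero : Bx t x L = 0 := Nat.find_spec hMzero
  have hLpos : ∀ d < L, Bx t x d ≠ 0 := fun d hd => Nat.find_min hMzero hd
  have hstep : ∀ D, Bx t x D = 0 → cnt x (D+1) = 0 ∧ Bx t x (D+1) = 0 := by
    intro D h
    have h2 := hrecB D
    rw [h, Nat.mul_zero] at h2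
    omega
  have hafter : ∀ d, L ≤ d → Bx t x d = 0 := by
    intro d hd
    induction d, hd using Nat.le_induction with
    | base => exact hLzero
    | succ d hd ih => exact (hstep d ih).2
  have hcnt0 : ∀ d, L < d → cnt x d = 0 := by
    intro d hd
    obtain ⟨e, rfl⟩ : ∃ e, d = e + 1 := ⟨d - 1, by omega⟩
    exact (hstep e (hafter e (by omega))).1
  have hxle : ∀ i, x i ≤ L := by
    intro i
    by_contra hcon
    push_neg at hcon
    have h1 : cnt x (x i) = 0 := hcnt0 _ hcon
    have h2 : 0 < cnt x (x i) :=
      Finset.card_pos.2 ⟨i, Finset.mem_filter.2 ⟨Finset.mem_univ i, rfl⟩⟩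
    omega
  -- the list
  set l : List ℕ := (List.range L).map (Bx t x) with hldef
  have hlenl : l.length = L := by simp [hldef]
  have hgetDl : ∀ d, l.getD d 0 = Bx t x d := by
    intro d
    by_cases hd : d < L
    · rw [List.getD_eq_getElem _ _ (by rw [hlenl]; exact hd)]
      simp [hldef]
    · rw [List.getD_eq_default _ _ (by rw [hlenl]; omega)]
      exact (hafter d (by omega)).symm
  have hbseq : IsBSeq t l := by
    refine ⟨?_, ?_, ?_⟩
    · intro v hv
      obtain ⟨d, hd, rfl⟩ := List.mem_map.1 hv
      exact Nat.pos_of_ne_zero (hLpos d (List.mem_range.1 hd))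
    · intro hne
      have hL0 : 0 < L := by
        by_contra hc
        push_neg at hc
        apply hne
        rw [hldef]
        simp [Nat.le_zero.1 hc]
      have hh : l.headI = l.getD 0 0 := by
        obtain ⟨a, tl, hcons⟩ : ∃ a tl, l = a :: tl := by
          cases hl2 : l with
          | nil => exact absurd hl2 hne
          | cons a tl => exact ⟨a, tl, rfl⟩
        rw [hcons]
        rfl
      have h1 := hgetDl 0
      have h2 := hLpos 0 hL0
      rw [hh, h1]
      omega
    · intro i hi
      have e1 : l.get ⟨i+1, hi⟩ = Bx t x (i+1) := by
        rw [List.get_eq_getElem, ← List.getD_eq_getElem _ 0, hgetDl]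
      have e2 : l.get ⟨i, Nat.lt_of_succ_lt hi⟩ = Bx t x i := by
        rw [List.get_eq_getElem, ← List.getD_eq_getElem _ 0, hgetDl]
      rw [e1, e2, ← hrecB i]
      exact Nat.le_add_left _ _
  have hsuml : l.sum = n := by
    have h1 := sum_af_N (t := t) (by omega) (cnt x) (Bx t x) h0B hrecB L
    rw [hLzero, Nat.add_zero] at h1
    have h2 : ∑ d ∈ Finset.range (L+1), cnt x d = 1 + n * (t-1) :=
      (fiber_card x (fun i => Nat.lt_succ_of_le (hxle i))).symm
    rw [h2] at h1
    have h3 : l.sum = ∑ d ∈ Finset.range L, Bx t x d := by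
      rw [hldef]; exact sum_range_map _ _
    have h4 : (t-1) * n = (t-1) * ∑ d ∈ Finset.range L, Bx t x d := by
      rw [mul_comm]
      have := Nat.add_left_cancel h1
      rw [← this, mul_comm]
    have h5 := Nat.eq_of_mul_eq_mul_left (show 0 < t - 1 by omega) h4
    rw [h3, ← h5]
  refine ⟨l, ⟨hbseq, hsuml⟩, ?_⟩
  have haf' : ∀ d, af t l d = cnt x d := by
    intro d
    cases d with
    | zero =>
      have h1 := hgetDl 0
      simp only [af]
      rw [h1]
      omega
    | succ d =>
      simp only [af]
      rw [hgetDl d, hgetDl (d+1)]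
      have h2 := hrecB d
      generalize t * Bx t x d = z at *
      omega
  have hLLl : LL t l = List.ofFn x := by
    refine (List.perm_iff_count.2 fun v => ?_).eq_of_pairwise'
      (sorted_bindrep _ _) (List.pairwise_ofFn.2 ?_)
    · rw [count_LL, haf' v]
      exact count_ofFn x v
    · intro i j hij
      exact hmono hij.le
  funext i
  show (LL t l).getD i 0 = x i
  have hlt : (i : ℕ) < (List.ofFn x).length := by
    rw [List.length_ofFn]; exact i.isLt
  rw [hLLl, List.getD_eq_getElem _ _ hlt, List.getElem_ofFn]

end Stmt14Aux

theorem stmt_14 (t n : ℕ) (ht : 2 ≤ t) :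
    {x : Fin (1 + n * (t - 1)) → ℕ | Monotone x ∧
      ∑ i, (1 : ℚ) / t ^ x i = 1}.ncard = cseq t n := by
  have himg : {x : Fin (1 + n * (t - 1)) → ℕ | Monotone x ∧
      ∑ i, (1 : ℚ) / t ^ x i = 1}
      = Stmt14Aux.FF t n '' {l : List ℕ | IsBSeq t l ∧ l.sum = n} := by
    ext x
    constructor
    · rintro ⟨h1, h2⟩
      obtain ⟨l, hl, hFl⟩ := Stmt14Aux.FF_surj ht x h1 h2
      exact ⟨l, hl, hFl⟩
    · rintro ⟨l, hl, rfl⟩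
      exact Stmt14Aux.FF_mem ht hl.1 hl.2
  rw [himg, Set.ncard_image_of_injOn (Stmt14Aux.FF_inj ht)]
  rfl
end
end

section
/- Let t ≥ 2 and n ≥ 1 be integers. Then c_n is at least the number of compositions of n − 1 into parts from {1, 2, …, t}, i.e., the number of finite sequences (d_1, …, d_m) of integers with 1 ≤ d_i ≤ t and d_1 + ⋯ + d_m = n − 1. (For t = 2 this gives the Fibonacci lower bound f_2(r) ≥ F_r.) -/
noncomputable section

theorem stmt_19 (t n : ℕ) (ht : 2 ≤ t) (hn : 1 ≤ n) :
    {d : List ℕ | (∀ x ∈ d, 1 ≤ x ∧ x ≤ t) ∧ d.sum = n - 1}.ncard ≤ cseq t n := by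
  set S : Set (List ℕ) := {d : List ℕ | (∀ x ∈ d, 1 ≤ x ∧ x ≤ t) ∧ d.sum = n - 1}
  set T : Set (List ℕ) := {l : List ℕ | IsBSeq t l ∧ l.sum = n}
  -- T is finite: it injects into `Composition n`
  have hTfin : T.Finite := by
    have hinj : Function.Injective (fun l : T => (⟨l.1, fun {x} hx => l.2.1.1 x hx, l.2.2⟩ : Composition n)) := by
      intro a b hab
      ext1
      exact congrArg Composition.blocks hab
    haveI : Finite T := Finite.of_injective _ hinj
    exact Set.toFinite T
  have himg : (fun d => (1 : ℕ) :: d) '' S ⊆ T := by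
    rintro _ ⟨d, ⟨hd1, hd2⟩, rfl⟩
    refine ⟨⟨?_, fun _ => rfl, ?_⟩, ?_⟩
    · intro x hx
      rcases List.mem_cons.mp hx with h | h
      · simp [h]
      · exact (hd1 x h).1
    · intro i h
      match i with
      | 0 =>
        have h0 : 0 < d.length := by simpa using h
        have hm : d.get ⟨0, h0⟩ ∈ d := List.get_mem _ _
        simpa using (hd1 _ hm).2
      | j + 1 =>
        have hj1 : j + 1 < d.length := by simpa using h
        have hm1 : d.get ⟨j + 1, hj1⟩ ∈ d := List.get_mem _ _
        have hm0 : d.get ⟨j, Nat.lt_of_succ_lt hj1⟩ ∈ d := List.get_mem _ _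
        have h1 : d.get ⟨j + 1, hj1⟩ ≤ t := (hd1 _ hm1).2
        have h2 : 1 ≤ d.get ⟨j, Nat.lt_of_succ_lt hj1⟩ := (hd1 _ hm0).1
        calc d.get ⟨j + 1, hj1⟩ ≤ t := h1
          _ = t * 1 := (mul_one t).symm
          _ ≤ t * d.get ⟨j, Nat.lt_of_succ_lt hj1⟩ := Nat.mul_le_mul_left t h2
    · simp [hd2, Nat.add_sub_cancel' hn]
  calc S.ncard = ((fun d => (1 : ℕ) :: d) '' S).ncard :=
        (Set.ncard_image_of_injective S (List.cons_injective)).symm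
    _ ≤ T.ncard := Set.ncard_le_ncard himg hTfin
end
end
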